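/- arXiv:math/0103218 — 7 statements merged into one kernel-verified Lean document; each statement's English description precedes it below -/
import Mathlib

section
/- Let (b_m)_{m≥1} be a real sequence with β := ∑_{m=1}^∞ m|b_m| < ∞, and let λ ≥ 0. Define the operator g ↦ g̃ on bounded real sequences by g̃_0 = g_0 and g̃_n = g̃_{n−1} − λ[∑_{m=2}^n g_m b_m (g_{n−1} − g_{n−m}) + g_{n−1} ∑_{j=n+1}^∞ g_j b_j]. If ‖g‖_Δ := ∑_{n=0}^∞ |(Δg)_n| < ∞, then ∑_{n=0}^∞ |(Δg̃)_n| ≤ |g_0| + 2λβ‖g‖_Δ². In particular ‖g̃‖_Δ < ∞. -/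
open Finset

/-- The difference operator: `(Δg)_0 = g_0`, `(Δg)_n = g_n - g_{n-1}` for `n ≥ 1`. -/
def deltaOp (g : ℕ → ℝ) : ℕ → ℝ
  | 0 => g 0
  | n + 1 => g (n + 1) - g n

/-- If `‖g‖_Δ < ∞`, then the transformed sequence `g̃` (defined by `g̃_0 = g_0` and
`g̃_n = g̃_{n-1} - λ[∑_{m=2}^n g_m b_m (g_{n-1} - g_{n-m}) + g_{n-1} ∑_{j=n+1}^∞ g_j b_j]`)
satisfies `‖g̃‖_Δ ≤ |g_0| + 2λβ‖g‖_Δ² < ∞`, where `β = ∑_{m≥1} m |b_m|`. -/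
theorem deltaNorm_tilde_le (b : ℕ → ℝ) (hb : Summable fun m : ℕ => (m : ℝ) * |b m|)
    (lam : ℝ) (hlam : 0 ≤ lam) (g gt : ℕ → ℝ)
    (hg : Summable fun n => |deltaOp g n|)
    (h0 : gt 0 = g 0)
    (hrec : ∀ n, 1 ≤ n → gt n = gt (n - 1) -
      lam * ((∑ m ∈ Finset.Icc 2 n, g m * b m * (g (n - 1) - g (n - m)))
        + g (n - 1) * ∑' j : ℕ, (if n + 1 ≤ j then g j * b j else 0))) :
    Summable (fun n => |deltaOp gt n|) ∧
      (∑' n, |deltaOp gt n|) ≤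
        |g 0| + 2 * lam * (∑' m : ℕ, (m : ℝ) * |b m|) * (∑' n, |deltaOp g n|) ^ 2 := by
  classical
  set D : ℕ → ℝ := fun n => |deltaOp g n| with hDdef
  set S : ℝ := ∑' n, D n with hSdef
  set β : ℝ := ∑' m : ℕ, (m : ℝ) * |b m| with hβdef
  have hgD : Summable D := hg
  have hDnn : ∀ n, 0 ≤ D n := fun n => abs_nonneg _
  have hSnn : 0 ≤ S := tsum_nonneg hDnn
  have hβnn : 0 ≤ β := tsum_nonneg fun m => mul_nonneg (Nat.cast_nonneg m) (abs_nonneg _)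
  have hb1 : Summable fun m : ℕ => |b m| := by
    rw [← summable_nat_add_iff 1]
    refine Summable.of_nonneg_of_le (fun n => abs_nonneg _) (fun n => ?_)
      ((summable_nat_add_iff 1).2 hb)
    have h1 : (1 : ℝ) ≤ ((n + 1 : ℕ) : ℝ) := by
      exact_mod_cast Nat.succ_le_succ (Nat.zero_le n)
    nlinarith [abs_nonneg (b (n + 1))]
  have htel : ∀ n, g n = ∑ k ∈ range (n + 1), deltaOp g k := by
    intro n
    induction n with
    | zero => simp [deltaOp]
    | succ n ih =>
      rw [Finset.sum_range_succ, ← ih]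
      simp [deltaOp]
  have hgb : ∀ n, |g n| ≤ S := by
    intro n
    rw [htel n]
    refine le_trans (Finset.abs_sum_le_sum_abs _ _) ?_
    exact Summable.sum_le_tsum _ (fun k _ => abs_nonneg _) hgD
  have hdiff : ∀ c a : ℕ, c ≤ a → |g a - g c| ≤ ∑ k ∈ Icc (c + 1) a, D k := by
    intro c a h
    have h1 : g a - g c = ∑ k ∈ Icc (c + 1) a, deltaOp g k := by
      have h2 : Icc (c + 1) a = Ico (c + 1) (a + 1) := by rw [Finset.Ico_add_one_right_eq_Icc]
      rw [h2, Finset.sum_Ico_eq_sub _ (by omega), ← htel, ← htel]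
    rw [h1]
    exact Finset.abs_sum_le_sum_abs _ _
  have hbt : ∀ k : ℕ, Summable fun j : ℕ => (if k + 2 ≤ j then |b j| else 0) := by
    intro k
    refine Summable.of_nonneg_of_le (fun j => ?_) (fun j => ?_) hb1
    · split <;> simp [abs_nonneg]
    · split <;> simp [abs_nonneg]
  have htails : ∀ k : ℕ, Summable fun j : ℕ => |if k + 2 ≤ j then g j * b j else 0| := by
    intro k
    refine Summable.of_nonneg_of_le (fun j => abs_nonneg _) (fun j => ?_) (hb1.mul_left S)
    by_cases h : k + 2 ≤ j
    · simp only [h, if_true, abs_mul]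
      exact mul_le_mul_of_nonneg_right (hgb j) (abs_nonneg _)
    · simp only [h, if_false, abs_zero]
      exact mul_nonneg hSnn (abs_nonneg _)
  -- key pointwise bound
  have hkey : ∀ k : ℕ, |deltaOp gt (k + 1)| ≤
      lam * (S * ∑ m ∈ Icc 2 (k + 1), |b m| * ∑ j ∈ Icc (k + 1 - m + 1) k, D j
        + S * S * ∑' j : ℕ, (if k + 2 ≤ j then |b j| else 0)) := by
    intro k
    have hr := hrec (k + 1) (by omega)
    simp only [Nat.add_sub_cancel] at hr
    have e : k + 1 + 1 = k + 2 := rfl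
    rw [e] at hr
    have hA : |∑ m ∈ Icc 2 (k + 1), g m * b m * (g k - g (k + 1 - m))|
        ≤ S * ∑ m ∈ Icc 2 (k + 1), |b m| * ∑ j ∈ Icc (k + 1 - m + 1) k, D j := by
      refine le_trans (Finset.abs_sum_le_sum_abs _ _) ?_
      rw [Finset.mul_sum]
      refine Finset.sum_le_sum fun m hm => ?_
      rw [abs_mul, abs_mul]
      have hm2 : 2 ≤ m := (Finset.mem_Icc.1 hm).1
      have h1 : |g m| * |b m| ≤ S * |b m| := mul_le_mul_of_nonneg_right (hgb m) (abs_nonneg _)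
      have h2 : |g k - g (k + 1 - m)| ≤ ∑ j ∈ Icc (k + 1 - m + 1) k, D j :=
        hdiff (k + 1 - m) k (by omega)
      have h3 : 0 ≤ ∑ j ∈ Icc (k + 1 - m + 1) k, D j :=
        Finset.sum_nonneg fun j _ => hDnn j
      calc |g m| * |b m| * |g k - g (k + 1 - m)|
          ≤ S * |b m| * (∑ j ∈ Icc (k + 1 - m + 1) k, D j) :=
            mul_le_mul h1 h2 (abs_nonneg _) (mul_nonneg hSnn (abs_nonneg _))
        _ = S * (|b m| * ∑ j ∈ Icc (k + 1 - m + 1) k, D j) := by ring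
    have hB : |g k * ∑' j : ℕ, (if k + 2 ≤ j then g j * b j else 0)|
        ≤ S * S * ∑' j : ℕ, (if k + 2 ≤ j then |b j| else 0) := by
      rw [abs_mul]
      have h1 : |∑' j : ℕ, (if k + 2 ≤ j then g j * b j else 0)|
          ≤ (∑' j : ℕ, (if k + 2 ≤ j then |b j| else 0)) * S := by
        calc |∑' j : ℕ, (if k + 2 ≤ j then g j * b j else 0)|
            ≤ ∑' j : ℕ, |if k + 2 ≤ j then g j * b j else 0| := by
              simpa using norm_tsum_le_tsum_norm (f := fun j : ℕ =>
                (if k + 2 ≤ j then g j * b j else 0)) (htails k)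
          _ ≤ ∑' j : ℕ, (if k + 2 ≤ j then |b j| else 0) * S := by
              refine Summable.tsum_le_tsum (fun j => ?_) (htails k) ((hbt k).mul_right S)
              by_cases h : k + 2 ≤ j
              · simp only [h, if_true, abs_mul]
                rw [mul_comm |g j|]
                exact mul_le_mul_of_nonneg_left (hgb j) (abs_nonneg _)
              · simp [h]
          _ = (∑' j : ℕ, (if k + 2 ≤ j then |b j| else 0)) * S := tsum_mul_right
      have h2 : 0 ≤ ∑' j : ℕ, (if k + 2 ≤ j then |b j| else 0) :=
        tsum_nonneg fun j => by split <;> simp [abs_nonneg]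
      calc |g k| * |∑' j : ℕ, (if k + 2 ≤ j then g j * b j else 0)|
          ≤ S * ((∑' j : ℕ, (if k + 2 ≤ j then |b j| else 0)) * S) :=
            mul_le_mul (hgb k) h1 (abs_nonneg _) hSnn
        _ = S * S * ∑' j : ℕ, (if k + 2 ≤ j then |b j| else 0) := by ring
    have hval : deltaOp gt (k + 1) = -(lam * ((∑ m ∈ Icc 2 (k + 1),
        g m * b m * (g k - g (k + 1 - m)))
        + g k * ∑' j : ℕ, (if k + 2 ≤ j then g j * b j else 0))) := by
      show gt (k + 1) - gt k = _
      rw [hr]; ring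
    rw [hval, abs_neg, abs_mul, abs_of_nonneg hlam]
    refine mul_le_mul_of_nonneg_left ?_ hlam
    exact le_trans (abs_add_le _ _) (add_le_add hA hB)
  -- counting bound for the A part, fixed m
  have hcountA : ∀ (M m : ℕ), 2 ≤ m →
      (∑ k ∈ range M, ∑ j ∈ Icc (k + 1 - m + 1) k, D j) ≤ (m : ℝ) * S := by
    intro M m hm2
    have step : ∀ k ∈ range M, ∑ j ∈ Icc (k + 1 - m + 1) k, D j
        = ∑ j ∈ range M, if j ∈ Icc (k + 1 - m + 1) k then D j else 0 := by
      intro k hk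
      rw [Finset.sum_ite_mem]
      congr 1
      refine (Finset.inter_eq_right.mpr ?_).symm
      intro j hj
      simp only [Finset.mem_Icc] at hj
      simp only [Finset.mem_range] at hk ⊢
      omega
    rw [Finset.sum_congr rfl step, Finset.sum_comm]
    have inner : ∀ j ∈ range M,
        (∑ k ∈ range M, if j ∈ Icc (k + 1 - m + 1) k then D j else 0) ≤ (m : ℝ) * D j := by
      intro j _
      rw [Finset.sum_ite, Finset.sum_const_zero, add_zero, Finset.sum_const, nsmul_eq_mul]
      refine mul_le_mul_of_nonneg_right ?_ (hDnn j)
      have hsub : (range M).filter (fun k => j ∈ Icc (k + 1 - m + 1) k) ⊆ Icc j (j + m - 1) := by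
        intro k hk
        simp only [Finset.mem_filter, Finset.mem_Icc, Finset.mem_range] at hk ⊢
        omega
      have hc := Finset.card_le_card hsub
      rw [Nat.card_Icc] at hc
      have hc2 : ((range M).filter (fun k => j ∈ Icc (k + 1 - m + 1) k)).card ≤ m := by omega
      exact_mod_cast hc2
    calc ∑ j ∈ range M, ∑ k ∈ range M, (if j ∈ Icc (k + 1 - m + 1) k then D j else 0)
        ≤ ∑ j ∈ range M, (m : ℝ) * D j := Finset.sum_le_sum inner
      _ = (m : ℝ) * ∑ j ∈ range M, D j := by rw [Finset.mul_sum]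
      _ ≤ (m : ℝ) * S := mul_le_mul_of_nonneg_left
          (Summable.sum_le_tsum _ (fun j _ => hDnn j) hgD) (by positivity)
  -- counting bound for the B part
  have hcountB : ∀ M : ℕ,
      (∑ k ∈ range M, ∑' j : ℕ, (if k + 2 ≤ j then |b j| else 0)) ≤ β := by
    intro M
    rw [← Summable.tsum_finsetSum (fun k _ => hbt k)]
    refine Summable.tsum_le_tsum (fun j => ?_) ?_ hb
    · rw [Finset.sum_ite, Finset.sum_const_zero, add_zero, Finset.sum_const, nsmul_eq_mul]
      refine mul_le_mul_of_nonneg_right ?_ (abs_nonneg _)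
      have hsub : (range M).filter (fun k => k + 2 ≤ j) ⊆ range j := by
        intro k hk
        simp only [Finset.mem_filter, Finset.mem_range] at hk ⊢
        omega
      have hc := Finset.card_le_card hsub
      rw [Finset.card_range] at hc
      exact_mod_cast hc
    · refine Summable.of_nonneg_of_le (fun j => ?_) (fun j => ?_) (hb1.mul_left (M:ℝ))
      · exact Finset.sum_nonneg fun k _ => by split <;> simp [abs_nonneg]
      · calc ∑ k ∈ range M, (if k + 2 ≤ j then |b j| else 0)
            ≤ ∑ _k ∈ range M, |b j| :=
              Finset.sum_le_sum fun k _ => by split <;> simp [abs_nonneg]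
          _ = (M : ℝ) * |b j| := by rw [Finset.sum_const, Finset.card_range, nsmul_eq_mul]
  -- main partial sum bound
  have hmain : ∀ N : ℕ, ∑ n ∈ range N, |deltaOp gt n| ≤ |g 0| + 2 * lam * β * S ^ 2 := by
    intro N
    have hRnn : (0 : ℝ) ≤ |g 0| + 2 * lam * β * S ^ 2 := by positivity
    cases N with
    | zero => simpa using hRnn
    | succ M =>
      rw [Finset.sum_range_succ']
      have h0t : |deltaOp gt 0| = |g 0| := by
        show |gt 0| = |g 0|
        rw [h0]
      rw [h0t]
      have hAsum : (∑ k ∈ range M, ∑ m ∈ Icc 2 (k + 1),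
          |b m| * ∑ j ∈ Icc (k + 1 - m + 1) k, D j) ≤ S * β := by
        have hext : ∀ k ∈ range M, (∑ m ∈ Icc 2 (k + 1), |b m| * ∑ j ∈ Icc (k + 1 - m + 1) k, D j)
            ≤ ∑ m ∈ Icc 2 M, |b m| * ∑ j ∈ Icc (k + 1 - m + 1) k, D j := by
          intro k hk
          refine Finset.sum_le_sum_of_subset_of_nonneg ?_ (fun m _ _ =>
            mul_nonneg (abs_nonneg _) (Finset.sum_nonneg fun j _ => hDnn j)) 
          intro m hm
          simp only [Finset.mem_Icc] at hm ⊢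
          simp only [Finset.mem_range] at hk
          omega
        calc (∑ k ∈ range M, ∑ m ∈ Icc 2 (k + 1), |b m| * ∑ j ∈ Icc (k + 1 - m + 1) k, D j)
            ≤ ∑ k ∈ range M, ∑ m ∈ Icc 2 M, |b m| * ∑ j ∈ Icc (k + 1 - m + 1) k, D j :=
              Finset.sum_le_sum hext
          _ = ∑ m ∈ Icc 2 M, ∑ k ∈ range M, |b m| * ∑ j ∈ Icc (k + 1 - m + 1) k, D j :=
              Finset.sum_comm
          _ = ∑ m ∈ Icc 2 M, |b m| * ∑ k ∈ range M, ∑ j ∈ Icc (k + 1 - m + 1) k, D j := by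
              simp [Finset.mul_sum]
          _ ≤ ∑ m ∈ Icc 2 M, |b m| * ((m : ℝ) * S) :=
              Finset.sum_le_sum fun m hm => mul_le_mul_of_nonneg_left
                (hcountA M m (Finset.mem_Icc.1 hm).1) (abs_nonneg _)
          _ = S * ∑ m ∈ Icc 2 M, (m : ℝ) * |b m| := by
              rw [Finset.mul_sum]
              exact Finset.sum_congr rfl fun m _ => by ring
          _ ≤ S * β := mul_le_mul_of_nonneg_left
              (Summable.sum_le_tsum _ (fun m _ => mul_nonneg (Nat.cast_nonneg m) (abs_nonneg _)) hb) hSnn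
      have hsum : ∑ k ∈ range M, |deltaOp gt (k + 1)| ≤ 2 * lam * β * S ^ 2 := by
        calc ∑ k ∈ range M, |deltaOp gt (k + 1)|
            ≤ ∑ k ∈ range M, lam * (S * ∑ m ∈ Icc 2 (k + 1),
                |b m| * ∑ j ∈ Icc (k + 1 - m + 1) k, D j
              + S * S * ∑' j : ℕ, (if k + 2 ≤ j then |b j| else 0)) :=
              Finset.sum_le_sum fun k _ => hkey k
          _ = lam * (S * (∑ k ∈ range M, ∑ m ∈ Icc 2 (k + 1),
                |b m| * ∑ j ∈ Icc (k + 1 - m + 1) k, D j)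
              + S * S * ∑ k ∈ range M, ∑' j : ℕ, (if k + 2 ≤ j then |b j| else 0)) := by
              rw [← Finset.mul_sum, Finset.sum_add_distrib, ← Finset.mul_sum, ← Finset.mul_sum]
          _ ≤ lam * (S * (S * β) + S * S * β) := by
              refine mul_le_mul_of_nonneg_left (add_le_add ?_ ?_) hlam
              · exact mul_le_mul_of_nonneg_left hAsum hSnn
              · exact mul_le_mul_of_nonneg_left (hcountB M) (mul_nonneg hSnn hSnn)
          _ = 2 * lam * β * S ^ 2 := by ring
      linarith [hsum]
  have hsummable : Summable fun n => |deltaOp gt n| :=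
    summable_of_sum_range_le (fun n => abs_nonneg _) hmain
  exact ⟨hsummable, Summable.tsum_le_of_sum_range_le hsummable hmain⟩
end

section
/- Let (b_m)_{m≥1} satisfy β := ∑_{m=1}^∞ m|b_m| < ∞ and let L ≥ 3/2. On the set D_L = {g ∈ ℓ_∞ : g_0 = 1, ‖g‖_Δ ≤ L}, for all 0 ≤ λ ≤ 1/(6βL), the operator g ↦ g̃ defined by g̃_0 = g_0 and g̃_n = g̃_{n−1} − λ[∑_{m=2}^n g_m b_m (g_{n−1} − g_{n−m}) + g_{n−1} ∑_{j=n+1}^∞ g_j b_j] maps D_L into D_L and satisfies ‖g̃ − h̃‖_Δ ≤ (2/3)‖g − h‖_Δ for all g, h ∈ D_L. -/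
lemma partial_delta (g : ℕ → ℝ) (n : ℕ) : g n = ∑ k ∈ Finset.range (n+1), deltaOp g k := by
  induction n with
  | zero => simp [deltaOp]
  | succ n ih => rw [Finset.sum_range_succ, ← ih]; simp [deltaOp]

lemma abs_le_tsum_delta (g : ℕ → ℝ) (hS : Summable fun n => |deltaOp g n|) (n : ℕ) :
    |g n| ≤ ∑' k, |deltaOp g k| := by
  rw [partial_delta g n]
  calc |∑ k ∈ Finset.range (n+1), deltaOp g k| ≤ ∑ k ∈ Finset.range (n+1), |deltaOp g k| :=
        Finset.abs_sum_le_sum_abs _ _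
    _ ≤ ∑' k, |deltaOp g k| := Summable.sum_le_tsum _ (fun i _ => abs_nonneg _) hS

lemma diff_bound (g : ℕ → ℝ) (a c : ℕ) (hac : a ≤ c) :
    |g c - g a| ≤ ∑ k ∈ Finset.Icc (a+1) c, |deltaOp g k| := by
  have : g c - g a = ∑ k ∈ Finset.Icc (a+1) c, deltaOp g k := by
    rw [← Finset.Ico_add_one_right_eq_Icc, Finset.sum_Ico_eq_sub _ (by omega), ← partial_delta, ← partial_delta]
  rw [this]
  exact Finset.abs_sum_le_sum_abs _ _

lemma delta_sub (g h : ℕ → ℝ) (n : ℕ) :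
    deltaOp (fun k => g k - h k) n = deltaOp g n - deltaOp h n := by
  cases n <;> (simp [deltaOp]; try ring)

lemma delta_eq (v : ℕ → ℝ) (n : ℕ) (hn : 1 ≤ n) : deltaOp v n = v n - v (n - 1) := by
  cases n with
  | zero => omega
  | succ k => simp [deltaOp]

lemma S1 (b u a : ℕ → ℝ) (ha0 : ∀ k, 0 ≤ a k) (haS : Summable a)
    (U : ℝ) (hU : ∀ m, |u m| ≤ U)
    (hb : Summable fun m : ℕ => (m:ℝ) * |b m|) (N : ℕ) :
    ∑ n ∈ Finset.Ico 1 N, ∑ m ∈ Finset.Icc 2 n,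
        |u m| * |b m| * ∑ k ∈ Finset.Icc (n-m+1) (n-1), a k
      ≤ U * (∑' k, a k) * (∑' m : ℕ, (m:ℝ) * |b m|) := by
  have hU0 : 0 ≤ U := le_trans (abs_nonneg _) (hU 0)
  have hta : 0 ≤ ∑' k, a k := tsum_nonneg ha0
  have hswap : ∑ n ∈ Finset.Ico 1 N, ∑ m ∈ Finset.Icc 2 n,
      |u m| * |b m| * ∑ k ∈ Finset.Icc (n-m+1) (n-1), a k
      = ∑ m ∈ Finset.Icc 2 N, ∑ n ∈ (Finset.Ico 1 N).filter (fun n => m ∈ Finset.Icc 2 n),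
          |u m| * |b m| * ∑ k ∈ Finset.Icc (n-m+1) (n-1), a k := by
    apply Finset.sum_comm'
    intro n m
    simp only [Finset.mem_Ico, Finset.mem_Icc, Finset.mem_filter]
    omega
  rw [hswap]
  have key : ∀ m ∈ Finset.Icc 2 N,
      ∑ n ∈ (Finset.Ico 1 N).filter (fun n => m ∈ Finset.Icc 2 n),
          |u m| * |b m| * ∑ k ∈ Finset.Icc (n-m+1) (n-1), a k
        ≤ (m:ℝ) * |b m| * (U * ∑' k, a k) := by
    intro m hm
    simp only [Finset.mem_Icc] at hm
    have h2 : ∑ n ∈ (Finset.Ico 1 N).filter (fun n => m ∈ Finset.Icc 2 n),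
        ∑ k ∈ Finset.Icc (n-m+1) (n-1), a k ≤ (m:ℝ) * ∑' k, a k := by
      have hswap2 : ∑ n ∈ (Finset.Ico 1 N).filter (fun n => m ∈ Finset.Icc 2 n),
          ∑ k ∈ Finset.Icc (n-m+1) (n-1), a k
          = ∑ k ∈ Finset.range N,
              ∑ n ∈ ((Finset.Ico 1 N).filter (fun n => m ∈ Finset.Icc 2 n)).filter
                (fun n => k ∈ Finset.Icc (n-m+1) (n-1)), a k := by
        apply Finset.sum_comm'
        intro n k
        simp only [Finset.mem_Ico, Finset.mem_Icc, Finset.mem_filter, Finset.mem_range]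
        omega
      rw [hswap2]
      calc ∑ k ∈ Finset.range N,
              ∑ n ∈ ((Finset.Ico 1 N).filter (fun n => m ∈ Finset.Icc 2 n)).filter
                (fun n => k ∈ Finset.Icc (n-m+1) (n-1)), a k
          ≤ ∑ k ∈ Finset.range N, (m:ℝ) * a k := by
            apply Finset.sum_le_sum
            intro k _
            rw [Finset.sum_const, nsmul_eq_mul]
            have hcard : (((Finset.Ico 1 N).filter (fun n => m ∈ Finset.Icc 2 n)).filter
                (fun n => k ∈ Finset.Icc (n-m+1) (n-1))).card ≤ m := by
              calc _ ≤ (Finset.Icc (k+1) (k+m-1)).card := by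
                    apply Finset.card_le_card
                    intro n hn
                    simp only [Finset.mem_Ico, Finset.mem_Icc, Finset.mem_filter] at hn ⊢
                    omega
                _ ≤ m := by rw [Nat.card_Icc]; omega
            exact mul_le_mul_of_nonneg_right (by exact_mod_cast hcard) (ha0 k)
        _ = (m:ℝ) * ∑ k ∈ Finset.range N, a k := by rw [Finset.mul_sum]
        _ ≤ (m:ℝ) * ∑' k, a k := by
            apply mul_le_mul_of_nonneg_left _ (by positivity)
            exact Summable.sum_le_tsum _ (fun i _ => ha0 i) haS
    calc ∑ n ∈ (Finset.Ico 1 N).filter (fun n => m ∈ Finset.Icc 2 n),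
          |u m| * |b m| * ∑ k ∈ Finset.Icc (n-m+1) (n-1), a k
        = |u m| * |b m| * ∑ n ∈ (Finset.Ico 1 N).filter (fun n => m ∈ Finset.Icc 2 n),
            ∑ k ∈ Finset.Icc (n-m+1) (n-1), a k := by rw [Finset.mul_sum]
      _ ≤ |u m| * |b m| * ((m:ℝ) * ∑' k, a k) := by
          apply mul_le_mul_of_nonneg_left h2 (by positivity)
      _ ≤ U * |b m| * ((m:ℝ) * ∑' k, a k) := by
          apply mul_le_mul_of_nonneg_right _ (by positivity)
          exact mul_le_mul_of_nonneg_right (hU m) (abs_nonneg _)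
      _ = (m:ℝ) * |b m| * (U * ∑' k, a k) := by ring
  calc ∑ m ∈ Finset.Icc 2 N, ∑ n ∈ (Finset.Ico 1 N).filter (fun n => m ∈ Finset.Icc 2 n),
          |u m| * |b m| * ∑ k ∈ Finset.Icc (n-m+1) (n-1), a k
      ≤ ∑ m ∈ Finset.Icc 2 N, (m:ℝ) * |b m| * (U * ∑' k, a k) := Finset.sum_le_sum key
    _ = (∑ m ∈ Finset.Icc 2 N, (m:ℝ) * |b m|) * (U * ∑' k, a k) := by rw [← Finset.sum_mul]
    _ ≤ (∑' m : ℕ, (m:ℝ) * |b m|) * (U * ∑' k, a k) := by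
        apply mul_le_mul_of_nonneg_right _ (by positivity)
        exact Summable.sum_le_tsum _ (fun i _ => by positivity) hb
    _ = U * (∑' k, a k) * (∑' m : ℕ, (m:ℝ) * |b m|) := by ring

lemma S2 (c : ℕ → ℝ) (hc0 : ∀ j, 0 ≤ c j) (hc : Summable fun j : ℕ => (j:ℝ) * c j) (N : ℕ) :
    ∑ n ∈ Finset.Ico 1 N, (∑' j : ℕ, if n + 1 ≤ j then c j else 0)
      ≤ ∑' j : ℕ, (j:ℝ) * c j := by
  have hle : ∀ n : ℕ, 1 ≤ n → ∀ j : ℕ, (if n + 1 ≤ j then c j else 0) ≤ (j:ℝ) * c j := by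
    intro n hn j
    split
    · next hj =>
        have h1 : (1:ℝ) ≤ (j:ℝ) := by exact_mod_cast by omega
        nlinarith [hc0 j]
    · exact mul_nonneg (Nat.cast_nonneg j) (hc0 j)
  have hsum : ∀ n ∈ Finset.Ico 1 N, Summable (fun j : ℕ => if n + 1 ≤ j then c j else 0) := by
    intro n hn
    simp only [Finset.mem_Ico] at hn
    exact hc.of_nonneg_of_le (fun j => by split; exacts [hc0 j, le_rfl]) (hle n hn.1)
  rw [← Summable.tsum_finsetSum hsum]
  apply Summable.tsum_le_tsum _ (summable_sum hsum) hc
  intro j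
  calc ∑ n ∈ Finset.Ico 1 N, (if n + 1 ≤ j then c j else 0)
      = ∑ n ∈ (Finset.Ico 1 N).filter (fun n => n + 1 ≤ j), c j := by
        rw [Finset.sum_filter]
    _ = ((Finset.Ico 1 N).filter (fun n => n + 1 ≤ j)).card * c j := by
        rw [Finset.sum_const, nsmul_eq_mul]
    _ ≤ (j:ℝ) * c j := by
        apply mul_le_mul_of_nonneg_right _ (hc0 j)
        have hcard : ((Finset.Ico 1 N).filter (fun n => n + 1 ≤ j)).card ≤ j := by
          calc _ ≤ (Finset.Ico 1 (j+1)).card := by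
                apply Finset.card_le_card
                intro n hn
                simp only [Finset.mem_Ico, Finset.mem_filter] at hn ⊢
                omega
            _ ≤ j := by rw [Nat.card_Ico]; omega
        exact_mod_cast hcard

set_option maxHeartbeats 2000000 in
/-- On `D_L = {g : g_0 = 1, ‖g‖_Δ ≤ L}` with `L ≥ 3/2` and `0 ≤ λ` with `6βLλ ≤ 1`,
the operator `g ↦ g̃` maps `D_L` into `D_L` and is a `2/3`-contraction in `‖·‖_Δ`. -/
theorem tilde_contraction (b : ℕ → ℝ) (hb : Summable fun m : ℕ => (m : ℝ) * |b m|)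
    (L lam : ℝ) (hL : 3 / 2 ≤ L) (hlam0 : 0 ≤ lam)
    (hlam : 6 * (∑' m : ℕ, (m : ℝ) * |b m|) * L * lam ≤ 1)
    (g h gt ht : ℕ → ℝ)
    (hg0 : g 0 = 1) (hgS : Summable fun n => |deltaOp g n|)
    (hgL : (∑' n, |deltaOp g n|) ≤ L)
    (hh0 : h 0 = 1) (hhS : Summable fun n => |deltaOp h n|)
    (hhL : (∑' n, |deltaOp h n|) ≤ L)
    (hgt0 : gt 0 = g 0)
    (hgtrec : ∀ n, 1 ≤ n → gt n = gt (n - 1) -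
      lam * ((∑ m ∈ Finset.Icc 2 n, g m * b m * (g (n - 1) - g (n - m)))
        + g (n - 1) * ∑' j : ℕ, (if n + 1 ≤ j then g j * b j else 0)))
    (hht0 : ht 0 = h 0)
    (hhtrec : ∀ n, 1 ≤ n → ht n = ht (n - 1) -
      lam * ((∑ m ∈ Finset.Icc 2 n, h m * b m * (h (n - 1) - h (n - m)))
        + h (n - 1) * ∑' j : ℕ, (if n + 1 ≤ j then h j * b j else 0))) :
    (gt 0 = 1 ∧ Summable (fun n => |deltaOp gt n|) ∧ (∑' n, |deltaOp gt n|) ≤ L) ∧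
      Summable (fun n => |deltaOp (fun k => gt k - ht k) n|) ∧
      (∑' n, |deltaOp (fun k => gt k - ht k) n|) ≤
        (2 / 3) * ∑' n, |deltaOp (fun k => g k - h k) n| := by
  have hL0 : (0:ℝ) ≤ L := by linarith
  have hβ0 : (0:ℝ) ≤ ∑' m : ℕ, (m:ℝ) * |b m| := tsum_nonneg (fun m => by positivity)
  have hgabs : ∀ n, |g n| ≤ L := fun n => (abs_le_tsum_delta g hgS n).trans hgL
  have hhabs : ∀ n, |h n| ≤ L := fun n => (abs_le_tsum_delta h hhS n).trans hhL
  -- summability of |b|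
  have hb1 : Summable (fun n : ℕ => ((n+1 : ℕ):ℝ) * |b (n+1)|) := (summable_nat_add_iff 1).2 hb
  have hbabs : Summable (fun j : ℕ => |b j|) := by
    rw [← summable_nat_add_iff 1]
    apply hb1.of_nonneg_of_le (fun j => abs_nonneg _)
    intro j
    have h1 : (1:ℝ) ≤ ((j+1:ℕ):ℝ) := by push_cast; linarith
    nlinarith [abs_nonneg (b (j+1))]
  have hbtail : ∀ n : ℕ, Summable (fun j : ℕ => if n + 1 ≤ j then |b j| else 0) := by
    intro n
    apply hbabs.of_nonneg_of_le (fun j => by split; exacts [abs_nonneg _, le_rfl])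
    intro j; split; exacts [le_rfl, abs_nonneg _]
  -- tail summability for products
  have htailv : ∀ (v : ℕ → ℝ) (V : ℝ), (∀ j, |v j| ≤ V) → ∀ n : ℕ,
      Summable (fun j : ℕ => |if n + 1 ≤ j then v j * b j else 0|) := by
    intro v V hv n
    apply Summable.of_nonneg_of_le (fun j => abs_nonneg _) _ (hbabs.mul_left V)
    intro j
    rw [apply_ite abs, abs_zero]
    split
    · rw [abs_mul]; exact mul_le_mul_of_nonneg_right (hv j) (abs_nonneg _)
    · exact mul_nonneg ((abs_nonneg _).trans (hv 0)) (abs_nonneg _)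
  have htsum_bound : ∀ (v : ℕ → ℝ) (V : ℝ), (∀ j, |v j| ≤ V) → ∀ n : ℕ,
      |∑' j : ℕ, (if n + 1 ≤ j then v j * b j else 0)|
        ≤ V * ∑' j : ℕ, (if n + 1 ≤ j then |b j| else 0) := by
    intro v V hv n
    have hV0 : 0 ≤ V := (abs_nonneg _).trans (hv 0)
    calc |∑' j : ℕ, (if n + 1 ≤ j then v j * b j else 0)|
        ≤ ∑' j : ℕ, |if n + 1 ≤ j then v j * b j else 0| := by
          simpa [Real.norm_eq_abs] using
            norm_tsum_le_tsum_norm (f := fun j : ℕ => if n + 1 ≤ j then v j * b j else 0)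
              (by simpa [Real.norm_eq_abs] using htailv v V hv n)
      _ ≤ ∑' j : ℕ, V * (if n + 1 ≤ j then |b j| else 0) := by
          apply Summable.tsum_le_tsum _ (htailv v V hv n) ((hbtail n).mul_left V)
          intro j
          rw [apply_ite abs, abs_zero, mul_ite, mul_zero]
          split
          · rw [abs_mul]; exact mul_le_mul_of_nonneg_right (hv j) (abs_nonneg _)
          · exact le_rfl
      _ = V * ∑' j : ℕ, (if n + 1 ≤ j then |b j| else 0) := tsum_mul_left
  -- Part 1 : per-n bound
  have hmain1 : ∀ n : ℕ, 1 ≤ n → |deltaOp gt n| ≤ lam *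
      ((∑ m ∈ Finset.Icc 2 n, |g m| * |b m| * ∑ k ∈ Finset.Icc (n-m+1) (n-1), |deltaOp g k|)
        + L * (L * ∑' j : ℕ, (if n + 1 ≤ j then |b j| else 0))) := by
    intro n hn
    rw [delta_eq gt n hn, hgtrec n hn, sub_sub_cancel_left, abs_neg, abs_mul,
      abs_of_nonneg hlam0]
    apply mul_le_mul_of_nonneg_left _ hlam0
    calc |(∑ m ∈ Finset.Icc 2 n, g m * b m * (g (n - 1) - g (n - m)))
          + g (n - 1) * ∑' j : ℕ, (if n + 1 ≤ j then g j * b j else 0)|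
        ≤ |∑ m ∈ Finset.Icc 2 n, g m * b m * (g (n - 1) - g (n - m))|
          + |g (n - 1) * ∑' j : ℕ, (if n + 1 ≤ j then g j * b j else 0)| := abs_add_le _ _
      _ ≤ (∑ m ∈ Finset.Icc 2 n, |g m| * |b m| * ∑ k ∈ Finset.Icc (n-m+1) (n-1), |deltaOp g k|)
          + L * (L * ∑' j : ℕ, (if n + 1 ≤ j then |b j| else 0)) := by
        apply add_le_add
        · refine (Finset.abs_sum_le_sum_abs _ _).trans (Finset.sum_le_sum ?_)
          intro m hm
          simp only [Finset.mem_Icc] at hm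
          rw [abs_mul, abs_mul]
          exact mul_le_mul_of_nonneg_left (diff_bound g (n-m) (n-1) (by omega)) (by positivity)
        · rw [abs_mul]
          exact mul_le_mul (hgabs (n-1)) (htsum_bound g L hgabs n) (abs_nonneg _) hL0
  have hbound1 : ∀ N : ℕ, ∑ n ∈ Finset.range N, |deltaOp gt n| ≤ L := by
    intro N
    rcases Nat.eq_zero_or_pos N with rfl | hpos
    · simp; linarith
    · rw [Finset.range_eq_Ico, ← Finset.sum_Ico_consecutive _ (Nat.zero_le 1) hpos]
      have h0 : ∑ n ∈ Finset.Ico 0 1, |deltaOp gt n| = 1 := by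
        have : Finset.Ico 0 1 = {0} := rfl
        simp [this, deltaOp, hgt0, hg0]
      have h1 : ∑ n ∈ Finset.Ico 1 N, |deltaOp gt n|
          ≤ lam * (L * L * (∑' m : ℕ, (m:ℝ) * |b m|)
              + L * L * (∑' m : ℕ, (m:ℝ) * |b m|)) := by
        calc ∑ n ∈ Finset.Ico 1 N, |deltaOp gt n|
            ≤ ∑ n ∈ Finset.Ico 1 N, lam *
              ((∑ m ∈ Finset.Icc 2 n, |g m| * |b m| *
                  ∑ k ∈ Finset.Icc (n-m+1) (n-1), |deltaOp g k|)
                + L * (L * ∑' j : ℕ, (if n + 1 ≤ j then |b j| else 0))) :=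
              Finset.sum_le_sum (fun n hn => hmain1 n (Finset.mem_Ico.1 hn).1)
          _ = lam * ((∑ n ∈ Finset.Ico 1 N, ∑ m ∈ Finset.Icc 2 n, |g m| * |b m| *
                  ∑ k ∈ Finset.Icc (n-m+1) (n-1), |deltaOp g k|)
                + ∑ n ∈ Finset.Ico 1 N,
                    L * (L * ∑' j : ℕ, (if n + 1 ≤ j then |b j| else 0))) := by
              rw [← Finset.mul_sum, Finset.sum_add_distrib]
          _ ≤ lam * (L * L * (∑' m : ℕ, (m:ℝ) * |b m|)
              + L * L * (∑' m : ℕ, (m:ℝ) * |b m|)) := by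
              apply mul_le_mul_of_nonneg_left _ hlam0
              apply add_le_add
              · refine (S1 b g (fun k => |deltaOp g k|) (fun k => abs_nonneg _) hgS L hgabs hb N).trans ?_
                apply mul_le_mul_of_nonneg_right _ hβ0
                exact mul_le_mul_of_nonneg_left hgL hL0
              · have heq : ∑ n ∈ Finset.Ico 1 N,
                    L * (L * ∑' j : ℕ, (if n + 1 ≤ j then |b j| else 0))
                    = L * L * ∑ n ∈ Finset.Ico 1 N,
                        ∑' j : ℕ, (if n + 1 ≤ j then |b j| else 0) := by
                  rw [Finset.mul_sum]
                  exact Finset.sum_congr rfl (fun n _ => by ring)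
                rw [heq]
                apply mul_le_mul_of_nonneg_left _ (by positivity)
                exact S2 (fun j => |b j|) (fun j => abs_nonneg _) hb N
      rw [h0]
      nlinarith [mul_le_mul_of_nonneg_right hlam (show (0:ℝ) ≤ L/3 by linarith)]
  have hgtS : Summable (fun n => |deltaOp gt n|) :=
    summable_of_sum_range_le (fun n => abs_nonneg _) hbound1
  -- Part 2
  set d : ℕ → ℝ := fun k => g k - h k with hd
  have hdd : ∀ n, deltaOp d n = deltaOp g n - deltaOp h n := by
    intro n; rw [hd]; exact delta_sub g h n
  have hdS : Summable (fun n => |deltaOp d n|) := by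
    apply Summable.of_nonneg_of_le (fun n => abs_nonneg _) _ (hgS.add hhS)
    intro n
    rw [hdd, sub_eq_add_neg]
    exact (abs_add_le _ _).trans (by rw [abs_neg])
  have hD0 : (0:ℝ) ≤ ∑' n, |deltaOp d n| := tsum_nonneg (fun n => abs_nonneg _)
  have hdabs : ∀ n, |d n| ≤ ∑' k, |deltaOp d k| := abs_le_tsum_delta d hdS
  have hDL : ∀ n, |d n| ≤ ∑' k, |deltaOp d k| := hdabs
  have hTgS : ∀ n : ℕ, Summable (fun j : ℕ => if n + 1 ≤ j then g j * b j else 0) :=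
    fun n => (htailv g L hgabs n).of_abs
  have hThS : ∀ n : ℕ, Summable (fun j : ℕ => if n + 1 ≤ j then h j * b j else 0) :=
    fun n => (htailv h L hhabs n).of_abs
  have hmain2 : ∀ n : ℕ, 1 ≤ n → |deltaOp (fun k => gt k - ht k) n| ≤ lam *
      ((∑ m ∈ Finset.Icc 2 n, |d m| * |b m| * ∑ k ∈ Finset.Icc (n-m+1) (n-1), |deltaOp g k|)
        + (∑ m ∈ Finset.Icc 2 n, |h m| * |b m| * ∑ k ∈ Finset.Icc (n-m+1) (n-1), |deltaOp d k|)
        + ((∑' k, |deltaOp d k|) * (L * ∑' j : ℕ, (if n + 1 ≤ j then |b j| else 0))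
          + L * ((∑' k, |deltaOp d k|) * ∑' j : ℕ, (if n + 1 ≤ j then |b j| else 0)))) := by
    intro n hn
    have hTdiff : (∑' j : ℕ, (if n + 1 ≤ j then g j * b j else 0))
        - (∑' j : ℕ, (if n + 1 ≤ j then h j * b j else 0))
        = ∑' j : ℕ, (if n + 1 ≤ j then d j * b j else 0) := by
      rw [← Summable.tsum_sub (hTgS n) (hThS n)]
      apply tsum_congr
      intro j
      by_cases hj : n + 1 ≤ j <;> simp [hj, hd] <;> ring
    have hstep : deltaOp (fun k => gt k - ht k) n =
        -(lam * (((∑ m ∈ Finset.Icc 2 n, g m * b m * (g (n - 1) - g (n - m)))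
            + g (n - 1) * ∑' j : ℕ, (if n + 1 ≤ j then g j * b j else 0))
          - ((∑ m ∈ Finset.Icc 2 n, h m * b m * (h (n - 1) - h (n - m)))
            + h (n - 1) * ∑' j : ℕ, (if n + 1 ≤ j then h j * b j else 0)))) := by
      rw [delta_eq _ n hn]
      simp only [hgtrec n hn, hhtrec n hn]
      ring
    have hident : ((∑ m ∈ Finset.Icc 2 n, g m * b m * (g (n - 1) - g (n - m)))
            + g (n - 1) * ∑' j : ℕ, (if n + 1 ≤ j then g j * b j else 0))
          - ((∑ m ∈ Finset.Icc 2 n, h m * b m * (h (n - 1) - h (n - m)))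
            + h (n - 1) * ∑' j : ℕ, (if n + 1 ≤ j then h j * b j else 0))
        = (∑ m ∈ Finset.Icc 2 n, (d m * b m * (g (n - 1) - g (n - m))
            + h m * b m * (d (n - 1) - d (n - m))))
          + (d (n - 1) * (∑' j : ℕ, (if n + 1 ≤ j then g j * b j else 0))
            + h (n - 1) * (∑' j : ℕ, (if n + 1 ≤ j then d j * b j else 0))) := by
      rw [← hTdiff]
      rw [show (∑ m ∈ Finset.Icc 2 n, (d m * b m * (g (n - 1) - g (n - m))
            + h m * b m * (d (n - 1) - d (n - m))))
          = (∑ m ∈ Finset.Icc 2 n, (g m * b m * (g (n - 1) - g (n - m))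
              - h m * b m * (h (n - 1) - h (n - m)))) from
        Finset.sum_congr rfl (fun m _ => by simp only [hd]; ring)]
      rw [Finset.sum_sub_distrib]
      simp only [hd]
      ring
    rw [hstep, hident, abs_neg, abs_mul, abs_of_nonneg hlam0]
    apply mul_le_mul_of_nonneg_left _ hlam0
    calc |(∑ m ∈ Finset.Icc 2 n, (d m * b m * (g (n - 1) - g (n - m))
            + h m * b m * (d (n - 1) - d (n - m))))
          + (d (n - 1) * (∑' j : ℕ, (if n + 1 ≤ j then g j * b j else 0))
            + h (n - 1) * (∑' j : ℕ, (if n + 1 ≤ j then d j * b j else 0)))|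
        ≤ |∑ m ∈ Finset.Icc 2 n, (d m * b m * (g (n - 1) - g (n - m))
            + h m * b m * (d (n - 1) - d (n - m)))|
          + (|d (n - 1) * (∑' j : ℕ, (if n + 1 ≤ j then g j * b j else 0))|
            + |h (n - 1) * (∑' j : ℕ, (if n + 1 ≤ j then d j * b j else 0))|) :=
          (abs_add_le _ _).trans (by gcongr; exact abs_add_le _ _)
      _ ≤ ((∑ m ∈ Finset.Icc 2 n, |d m| * |b m| * ∑ k ∈ Finset.Icc (n-m+1) (n-1), |deltaOp g k|)
            + (∑ m ∈ Finset.Icc 2 n, |h m| * |b m| * ∑ k ∈ Finset.Icc (n-m+1) (n-1), |deltaOp d k|))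
          + ((∑' k, |deltaOp d k|) * (L * ∑' j : ℕ, (if n + 1 ≤ j then |b j| else 0))
            + L * ((∑' k, |deltaOp d k|) * ∑' j : ℕ, (if n + 1 ≤ j then |b j| else 0))) := by
          apply add_le_add
          · calc |∑ m ∈ Finset.Icc 2 n, (d m * b m * (g (n - 1) - g (n - m))
                + h m * b m * (d (n - 1) - d (n - m)))|
                ≤ ∑ m ∈ Finset.Icc 2 n, |d m * b m * (g (n - 1) - g (n - m))
                    + h m * b m * (d (n - 1) - d (n - m))| := Finset.abs_sum_le_sum_abs _ _
              _ ≤ ∑ m ∈ Finset.Icc 2 n, (|d m| * |b m| * ∑ k ∈ Finset.Icc (n-m+1) (n-1), |deltaOp g k|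
                    + |h m| * |b m| * ∑ k ∈ Finset.Icc (n-m+1) (n-1), |deltaOp d k|) := by
                  apply Finset.sum_le_sum
                  intro m hm
                  simp only [Finset.mem_Icc] at hm
                  refine (abs_add_le _ _).trans (add_le_add ?_ ?_)
                  · rw [abs_mul, abs_mul]
                    exact mul_le_mul_of_nonneg_left (diff_bound g (n-m) (n-1) (by omega))
                      (by positivity)
                  · rw [abs_mul, abs_mul]
                    exact mul_le_mul_of_nonneg_left (diff_bound d (n-m) (n-1) (by omega))
                      (by positivity)
              _ = (∑ m ∈ Finset.Icc 2 n, |d m| * |b m| * ∑ k ∈ Finset.Icc (n-m+1) (n-1), |deltaOp g k|)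
                  + (∑ m ∈ Finset.Icc 2 n, |h m| * |b m| * ∑ k ∈ Finset.Icc (n-m+1) (n-1), |deltaOp d k|) :=
                Finset.sum_add_distrib
          · apply add_le_add
            · rw [abs_mul]
              exact mul_le_mul (hdabs (n-1)) (htsum_bound g L hgabs n) (abs_nonneg _) hD0
            · rw [abs_mul]
              exact mul_le_mul (hhabs (n-1)) (htsum_bound d (∑' k, |deltaOp d k|) hdabs n)
                (abs_nonneg _) hL0
  have hbound2 : ∀ N : ℕ, ∑ n ∈ Finset.range N, |deltaOp (fun k => gt k - ht k) n|
      ≤ (2/3) * ∑' n, |deltaOp d n| := by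
    intro N
    rcases Nat.eq_zero_or_pos N with rfl | hpos
    · simp; positivity
    · rw [Finset.range_eq_Ico, ← Finset.sum_Ico_consecutive _ (Nat.zero_le 1) hpos]
      have h0 : ∑ n ∈ Finset.Ico 0 1, |deltaOp (fun k => gt k - ht k) n| = 0 := by
        have e : Finset.Ico 0 1 = {0} := rfl
        simp [e, deltaOp, hgt0, hht0, hg0, hh0]
      have h1 : ∑ n ∈ Finset.Ico 1 N, |deltaOp (fun k => gt k - ht k) n|
          ≤ lam * ((∑' k, |deltaOp d k|) * L * (∑' m : ℕ, (m:ℝ) * |b m|)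
              + L * (∑' k, |deltaOp d k|) * (∑' m : ℕ, (m:ℝ) * |b m|)
              + ((∑' k, |deltaOp d k|) * L * (∑' m : ℕ, (m:ℝ) * |b m|)
                + L * (∑' k, |deltaOp d k|) * (∑' m : ℕ, (m:ℝ) * |b m|))) := by
        calc ∑ n ∈ Finset.Ico 1 N, |deltaOp (fun k => gt k - ht k) n|
            ≤ ∑ n ∈ Finset.Ico 1 N, lam *
              ((∑ m ∈ Finset.Icc 2 n, |d m| * |b m| * ∑ k ∈ Finset.Icc (n-m+1) (n-1), |deltaOp g k|)
                + (∑ m ∈ Finset.Icc 2 n, |h m| * |b m| * ∑ k ∈ Finset.Icc (n-m+1) (n-1), |deltaOp d k|)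
                + ((∑' k, |deltaOp d k|) * (L * ∑' j : ℕ, (if n + 1 ≤ j then |b j| else 0))
                  + L * ((∑' k, |deltaOp d k|) * ∑' j : ℕ, (if n + 1 ≤ j then |b j| else 0)))) :=
              Finset.sum_le_sum (fun n hn => hmain2 n (Finset.mem_Ico.1 hn).1)
          _ = lam * ((∑ n ∈ Finset.Ico 1 N, ∑ m ∈ Finset.Icc 2 n, |d m| * |b m| *
                  ∑ k ∈ Finset.Icc (n-m+1) (n-1), |deltaOp g k|)
                + (∑ n ∈ Finset.Ico 1 N, ∑ m ∈ Finset.Icc 2 n, |h m| * |b m| *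
                    ∑ k ∈ Finset.Icc (n-m+1) (n-1), |deltaOp d k|)
                + ((∑' k, |deltaOp d k|) * L *
                    ∑ n ∈ Finset.Ico 1 N, ∑' j : ℕ, (if n + 1 ≤ j then |b j| else 0)
                  + L * (∑' k, |deltaOp d k|) *
                    ∑ n ∈ Finset.Ico 1 N, ∑' j : ℕ, (if n + 1 ≤ j then |b j| else 0))) := by
              rw [← Finset.mul_sum]
              congr 1
              rw [Finset.sum_add_distrib, Finset.sum_add_distrib, Finset.sum_add_distrib,
                Finset.mul_sum, Finset.mul_sum]
              congr 2
              · exact Finset.sum_congr rfl (fun n _ => by ring)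
              · exact Finset.sum_congr rfl (fun n _ => by ring)
          _ ≤ _ := by
              apply mul_le_mul_of_nonneg_left _ hlam0
              have hS2 : ∑ n ∈ Finset.Ico 1 N, ∑' j : ℕ, (if n + 1 ≤ j then |b j| else 0)
                  ≤ ∑' m : ℕ, (m:ℝ) * |b m| := S2 (fun j => |b j|) (fun j => abs_nonneg _) hb N
              apply add_le_add
              · apply add_le_add
                · exact S1 b d (fun k => |deltaOp g k|) (fun k => abs_nonneg _) hgS
                    (∑' k, |deltaOp d k|) hdabs hb N |>.trans
                    (by apply mul_le_mul_of_nonneg_right _ hβ0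
                        exact mul_le_mul_of_nonneg_left hgL hD0)
                · exact S1 b h (fun k => |deltaOp d k|) (fun k => abs_nonneg _) hdS
                    L hhabs hb N
              · apply add_le_add
                · exact mul_le_mul_of_nonneg_left hS2 (by positivity)
                · exact mul_le_mul_of_nonneg_left hS2 (by positivity)
      rw [h0, zero_add]
      refine h1.trans ?_
      nlinarith [mul_le_mul_of_nonneg_right hlam
        (show (0:ℝ) ≤ (2/3) * ∑' k, |deltaOp d k| by positivity)]
  have heS : Summable (fun n => |deltaOp (fun k => gt k - ht k) n|) :=
    summable_of_sum_range_le (fun n => abs_nonneg _) hbound2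
  exact ⟨⟨by rw [hgt0, hg0], hgtS, Summable.tsum_le_of_sum_range_le hgtS hbound1⟩, heS,
    Summable.tsum_le_of_sum_range_le heS hbound2⟩
end

section
/- Let (a_n)_{n≥0} be a bounded real sequence with a_0 = 1, 1/2 ≤ a_n ≤ 3/2 for all n, ∑_{n=1}^∞ |a_n − a_{n−1}| ≤ 1/2, and satisfying a_n = (1 − λ∑_{m=1}^∞ a_m b_m) a_{n−1} + λ∑_{m=2}^n a_m b_m a_{n−m} for all n ≥ 1, where ∑_{m=1}^∞ m|b_m| < ∞. Then the limit α = lim_{n→∞} a_n exists and satisfies α⁻¹ = 1 + λ∑_{m=2}^∞ (m−1) a_m b_m. -/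
open Filter Finset Topology

theorem swap_aux (a b : ℕ → ℝ) (N : ℕ) :
    (∑ k ∈ Finset.range N, ∑ m ∈ Finset.Icc 2 (k+1), a m * b m * a (k+1-m))
      = ∑ m ∈ Finset.Icc 2 N, a m * b m * ∑ j ∈ Finset.range (N-m+1), a j := by
  induction N with
  | zero => simp
  | succ N ih =>
    rw [Finset.sum_range_succ, ih]
    rcases Nat.eq_zero_or_pos N with rfl | hN
    · have h1 : Finset.Icc 2 1 = (∅ : Finset ℕ) := by decide
      have h0 : Finset.Icc 2 0 = (∅ : Finset ℕ) := by decide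
      simp [h0, h1]
    · have hins : Finset.Icc 2 (N+1) = insert (N+1) (Finset.Icc 2 N) := by
        ext x; simp only [Finset.mem_Icc, Finset.mem_insert]; omega
      have hnotmem : (N+1) ∉ Finset.Icc 2 N := by simp
      rw [hins, Finset.sum_insert hnotmem, Finset.sum_insert hnotmem]
      have e1 : ∀ m ∈ Finset.Icc 2 N, a m * b m * ∑ j ∈ Finset.range (N+1-m+1), a j
          = a m * b m * ∑ j ∈ Finset.range (N-m+1), a j + a m * b m * a (N-m+1) := by
        intro m hm
        simp only [Finset.mem_Icc] at hm
        have h2 : N+1-m+1 = (N-m+1)+1 := by omega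
        rw [h2, Finset.sum_range_succ]; ring
      have e2 : ∀ m ∈ Finset.Icc 2 N, a m * b m * a (N+1-m) = a m * b m * a (N-m+1) := by
        intro m hm
        simp only [Finset.mem_Icc] at hm
        have h2 : N+1-m = N-m+1 := by omega
        rw [h2]
      rw [Finset.sum_congr rfl e1, Finset.sum_congr rfl e2, Finset.sum_add_distrib]
      have h3 : N+1-(N+1) = 0 := by omega
      rw [h3]
      simp only [Nat.zero_add, Finset.sum_range_one]
      ring

set_option maxHeartbeats 1000000 in
/-- For the fixed-point sequence `(a_n)` the limit `α = lim a_n` exists and satisfies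
`α⁻¹ = 1 + λ ∑_{m=2}^∞ (m-1) a_m b_m`. -/
theorem limit_identity (b : ℕ → ℝ) (hb : Summable fun m : ℕ => (m : ℝ) * |b m|)
    (lam : ℝ) (hlam : 0 ≤ lam) (a : ℕ → ℝ) (ha0 : a 0 = 1)
    (hbd : ∀ n, 1 / 2 ≤ a n ∧ a n ≤ 3 / 2)
    (hS : Summable fun n : ℕ => |a (n + 1) - a n|)
    (hS' : (∑' n : ℕ, |a (n + 1) - a n|) ≤ 1 / 2)
    (hrec : ∀ n, 1 ≤ n →
      a n = (1 - lam * ∑' m : ℕ, (if 1 ≤ m then a m * b m else 0)) * a (n - 1)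
        + lam * ∑ m ∈ Finset.Icc 2 n, a m * b m * a (n - m)) :
    ∃ α : ℝ, Filter.Tendsto a Filter.atTop (nhds α) ∧
      α⁻¹ = 1 + lam * ∑' m : ℕ, (if 2 ≤ m then ((m : ℝ) - 1) * a m * b m else 0) := by
  classical
  have habs : ∀ n, |a n| ≤ 3/2 := fun n => abs_le.mpr ⟨by linarith [(hbd n).1], (hbd n).2⟩
  -- existence of the limit
  have hd : Summable (fun n => a (n+1) - a n) := by
    refine Summable.of_norm_bounded hS ?_
    intro n; simp [Real.norm_eq_abs]
  obtain ⟨l, hl⟩ := hd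
  set α : ℝ := 1 + l with hαdef
  have htend : Tendsto a atTop (𝓝 α) := by
    have h1 := hl.tendsto_sum_nat
    have h2 : (fun n => ∑ i ∈ Finset.range n, (a (i+1) - a i)) = fun n => a n - 1 := by
      funext n; rw [Finset.sum_range_sub, ha0]
    rw [h2] at h1
    have h3 := h1.add_const 1
    simp only [sub_add_cancel] at h3
    have hα : α = l + 1 := by rw [hαdef]; ring
    rw [hα]
    exact h3
  have hα12 : 1/2 ≤ α := ge_of_tendsto' htend (fun n => (hbd n).1)
  have hα0 : α ≠ 0 := by intro h; rw [h] at hα12; norm_num at hα12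
  set S : ℝ := ∑' m : ℕ, (if 1 ≤ m then a m * b m else 0) with hSdef
  set T : ℝ := ∑' m : ℕ, (if 2 ≤ m then ((m : ℝ) - 1) * a m * b m else 0) with hTdef
  refine ⟨α, htend, ?_⟩
  set Q : ℕ → ℝ := fun N => ∑ k ∈ Finset.range N, a k with hQdef
  set g : ℕ → ℝ := fun m => if 1 ≤ m then a m * b m else 0 with hgdef
  set tail : ℕ → ℝ := fun N => ∑' i : ℕ, g (i + (N+1)) with htaildef
  set F : ℕ → ℝ := fun N => ∑ m ∈ Finset.Icc 2 N, a m * b m * (Q (N-m+1) - Q N) with hFdef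
  set c : ℝ := lam * (a 1 * b 1) with hcdef
  -- basic bounds on Q
  have hQlb : ∀ N : ℕ, (N:ℝ)/2 ≤ Q N := by
    intro N
    have h1 : ∑ k ∈ Finset.range N, (1/2 : ℝ) ≤ Q N :=
      Finset.sum_le_sum fun k _ => (hbd k).1
    have h2 : ∑ k ∈ Finset.range N, (1/2 : ℝ) = (N:ℝ)/2 := by
      rw [Finset.sum_const, Finset.card_range, nsmul_eq_mul]; ring
    linarith
  have hQub : ∀ N : ℕ, Q N ≤ 3/2 * (N:ℝ) := by
    intro N
    have h1 : Q N ≤ ∑ k ∈ Finset.range N, (3/2 : ℝ) :=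
      Finset.sum_le_sum fun k _ => (hbd k).2
    have h2 : ∑ k ∈ Finset.range N, (3/2 : ℝ) = 3/2 * (N:ℝ) := by
      rw [Finset.sum_const, Finset.card_range, nsmul_eq_mul]; ring
    linarith
  have hQ0 : ∀ N, 0 ≤ Q N := fun N => le_trans (by positivity) (hQlb N)
  have hQtop : Tendsto Q atTop atTop := by
    refine tendsto_atTop_mono hQlb ?_
    exact (tendsto_natCast_atTop_atTop (R := ℝ)).atTop_div_const (by norm_num)
  -- summability of g
  have hgbd : ∀ m, ‖g m‖ ≤ 3/2 * ((m:ℝ) * |b m|) := by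
    intro m
    rcases Nat.eq_zero_or_pos m with rfl | hm
    · simp [hgdef]
    · have hm' : 1 ≤ m := hm
      simp only [hgdef, if_pos hm', Real.norm_eq_abs, abs_mul]
      have h1 : (1:ℝ) ≤ (m:ℝ) := by exact_mod_cast hm
      nlinarith [habs m, abs_nonneg (b m), abs_nonneg (a m)]
  have hgsum : Summable g := Summable.of_norm_bounded (hb.mul_left (3/2)) hgbd
  -- recursion rewritten
  have hrec' : ∀ k : ℕ, a (k+1) - a k =
      lam * ((∑ m ∈ Finset.Icc 2 (k+1), a m * b m * a (k+1-m)) - S * a k) := by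
    intro k
    have h := hrec (k+1) (by omega)
    simp only [Nat.add_sub_cancel] at h
    rw [h]; ring
  -- telescoped identity
  have htel : ∀ N, a N - 1 =
      lam * ((∑ m ∈ Finset.Icc 2 N, a m * b m * Q (N-m+1)) - S * Q N) := by
    intro N
    have h1 : a N - 1 = ∑ k ∈ Finset.range N, (a (k+1) - a k) := by
      rw [Finset.sum_range_sub, ha0]
    rw [h1, Finset.sum_congr rfl fun k _ => hrec' k, ← Finset.mul_sum,
      Finset.sum_sub_distrib, ← Finset.mul_sum, swap_aux a b N]
  -- decomposition of S
  have hsplit : ∀ N, 1 ≤ N →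
      S = a 1 * b 1 + (∑ m ∈ Finset.Icc 2 N, a m * b m) + tail N := by
    intro N hN
    have h := Summable.sum_add_tsum_nat_add (f := g) (N+1) hgsum
    have h2 : ∑ i ∈ Finset.range (N+1), g i
        = a 1 * b 1 + ∑ m ∈ Finset.Icc 2 N, a m * b m := by
      have hset : Finset.range (N+1) = insert 0 (insert 1 (Finset.Icc 2 N)) := by
        ext x
        simp only [Finset.mem_range, Finset.mem_insert, Finset.mem_Icc, Nat.lt_succ_iff]
        omega
      rw [hset, Finset.sum_insert (by simp), Finset.sum_insert (by simp [Finset.mem_Icc])]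
      have hg0 : g 0 = 0 := by simp [hgdef]
      have hg1 : g 1 = a 1 * b 1 := by simp [hgdef]
      rw [hg0, hg1, zero_add]
      congr 1
      refine Finset.sum_congr rfl fun m hm => ?_
      simp only [Finset.mem_Icc] at hm
      simp [hgdef, show 1 ≤ m by omega]
    rw [hSdef, ← h, h2, htaildef]
  -- the key identity
  have key : ∀ N, 1 ≤ N → c * Q N = lam * F N - lam * (tail N * Q N) - (a N - 1) := by
    intro N hN
    have h1 := htel N
    rw [hsplit N hN] at h1
    have h2 : F N = (∑ m ∈ Finset.Icc 2 N, a m * b m * Q (N-m+1))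
        - (∑ m ∈ Finset.Icc 2 N, a m * b m) * Q N := by
      rw [hFdef]
      simp only [mul_sub]
      rw [Finset.sum_sub_distrib, Finset.sum_mul]
    rw [h2]
    linear_combination h1
  -- difference of partial sums
  have hQdiffN : ∀ m N, 2 ≤ m → m ≤ N →
      Q N - Q (N-m+1) = ∑ j ∈ Finset.range (m-1), a (N-m+1+j) := by
    intro m N h2 hmN
    have e : ∑ j ∈ Finset.Ico (N-m+1) N, a j = ∑ j ∈ Finset.range (N - (N-m+1)), a ((N-m+1) + j) := by
      rw [Finset.sum_Ico_eq_sum_range]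
    have e2 : N - (N-m+1) = m - 1 := by omega
    rw [e2] at e
    rw [← e, Finset.sum_Ico_eq_sub _ (by omega : N-m+1 ≤ N)]
  -- convergence of index maps
  have hnat : ∀ (m j : ℕ), Tendsto (fun N : ℕ => N - m + 1 + j) atTop atTop := by
    intro m j
    refine tendsto_atTop_atTop.mpr fun B => ⟨B + m, fun N hN => by omega⟩
  -- dominated convergence for F
  set f : ℕ → ℕ → ℝ := fun N m =>
    if 2 ≤ m ∧ m ≤ N then a m * b m * (Q (N-m+1) - Q N) else 0 with hfdef
  have hFf : ∀ N, F N = ∑' m : ℕ, f N m := by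
    intro N
    rw [tsum_eq_sum (s := Finset.Icc 2 N) (fun m hm => by
      simp only [Finset.mem_Icc] at hm
      simp only [hfdef]
      rw [if_neg (by omega)])]
    refine (Finset.sum_congr rfl fun m hm => ?_).symm
    simp only [Finset.mem_Icc] at hm
    simp only [hfdef]
    rw [if_pos (by omega)]
  set g' : ℕ → ℝ := fun m =>
    if 2 ≤ m then a m * b m * (-(((m:ℝ) - 1) * α)) else 0 with hg'def
  have hpt : ∀ m, Tendsto (fun N => f N m) atTop (𝓝 (g' m)) := by
    intro m
    by_cases h2 : 2 ≤ m
    · have hdiff : Tendsto (fun N => Q N - Q (N-m+1)) atTop (𝓝 (((m:ℝ) - 1) * α)) := by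
        have hsum : Tendsto (fun N => ∑ j ∈ Finset.range (m-1), a (N-m+1+j)) atTop
            (𝓝 (∑ _j ∈ Finset.range (m-1), α)) := by
          refine tendsto_finset_sum _ fun j _ => ?_
          exact htend.comp (hnat m j)
        have hval : (∑ _j ∈ Finset.range (m-1), α) = ((m:ℝ) - 1) * α := by
          rw [Finset.sum_const, Finset.card_range, nsmul_eq_mul]
          congr 1
          push_cast [Nat.cast_sub (by omega : 1 ≤ m)]
          ring
        rw [hval] at hsum
        refine hsum.congr' ?_
        filter_upwards [eventually_ge_atTop m] with N hN
        exact (hQdiffN m N h2 hN).symm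
      have : Tendsto (fun N => a m * b m * (Q (N-m+1) - Q N)) atTop
          (𝓝 (a m * b m * (-(((m:ℝ) - 1) * α)))) := by
        have := (hdiff.neg).const_mul (a m * b m)
        simpa [neg_sub] using this
      have hg'm : g' m = a m * b m * (-(((m:ℝ) - 1) * α)) := by
        simp only [hg'def, if_pos h2]
      rw [hg'm]
      refine this.congr' ?_
      filter_upwards [eventually_ge_atTop m] with N hN
      simp only [hfdef]
      rw [if_pos (show 2 ≤ m ∧ m ≤ N from ⟨h2, hN⟩)]
    · have : (fun N => f N m) = fun _ => (0:ℝ) := by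
        funext N; simp only [hfdef]; rw [if_neg (by omega)]
      rw [this, hg'def]
      simp only [if_neg h2]
      exact tendsto_const_nhds
  have hbound : ∀ N, ∀ m, ‖f N m‖ ≤ 9/4 * ((m:ℝ) * |b m|) := by
    intro N m
    simp only [hfdef]
    split_ifs with h
    · obtain ⟨h2, hmN⟩ := h
      have hsumbd : |Q (N-m+1) - Q N| ≤ ((m:ℝ) - 1) * (3/2) := by
        rw [abs_sub_comm, hQdiffN m N h2 hmN]
        calc |∑ j ∈ Finset.range (m-1), a (N-m+1+j)|
            ≤ ∑ j ∈ Finset.range (m-1), |a (N-m+1+j)| := Finset.abs_sum_le_sum_abs _ _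
          _ ≤ ∑ _j ∈ Finset.range (m-1), (3/2:ℝ) :=
              Finset.sum_le_sum fun j _ => habs _
          _ = ((m:ℝ) - 1) * (3/2) := by
              rw [Finset.sum_const, Finset.card_range, nsmul_eq_mul]
              congr 1
              push_cast [Nat.cast_sub (by omega : 1 ≤ m)]
              ring
      have hm1 : (1:ℝ) ≤ (m:ℝ) := by exact_mod_cast (by omega : 1 ≤ m)
      rw [Real.norm_eq_abs, abs_mul, abs_mul]
      have t1 : |a m| * |b m| ≤ 3/2 * |b m| :=
        mul_le_mul_of_nonneg_right (habs m) (abs_nonneg _)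
      have t2 : |a m| * |b m| * |Q (N-m+1) - Q N| ≤ 3/2 * |b m| * (((m:ℝ) - 1) * (3/2)) :=
        mul_le_mul t1 hsumbd (abs_nonneg _) (by positivity)
      have t3 : 3/2 * |b m| * (((m:ℝ) - 1) * (3/2)) ≤ 9/4 * ((m:ℝ) * |b m|) := by
        nlinarith [abs_nonneg (b m)]
      linarith
    · simp; positivity
  have hFtend : Tendsto F atTop (𝓝 (-(α * T))) := by
    have hdom := tendsto_tsum_of_dominated_convergence (f := f) (g := g')
      (bound := fun m => 9/4 * ((m:ℝ) * |b m|)) (hb.mul_left (9/4)) hpt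
      (Eventually.of_forall hbound)
    have hgT : ∑' m, g' m = -(α * T) := by
      have : ∀ m : ℕ, g' m = (-α) * (if 2 ≤ m then ((m:ℝ) - 1) * a m * b m else 0) := by
        intro m
        simp only [hg'def]
        split_ifs <;> ring
      rw [tsum_congr this, tsum_mul_left, hTdef]
      ring
    rw [hgT] at hdom
    refine hdom.congr' ?_
    filter_upwards with N
    exact (hFf N).symm
  -- tail term tends to zero
  have htail0 : Tendsto (fun N => tail N * Q N) atTop (𝓝 0) := by
    set v : ℕ → ℝ := fun N => ∑' i : ℕ, ((i + (N+1) : ℕ) : ℝ) * |b (i + (N+1))| with hvdef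
    have hv0 : Tendsto v atTop (𝓝 0) := by
      have h1 := tendsto_sum_nat_add (f := fun m : ℕ => ((m:ℝ) * |b m|))
      have h2 : Tendsto (fun N : ℕ => N + 1) atTop atTop := tendsto_add_atTop_nat 1
      exact h1.comp h2
    have hv_nonneg : ∀ N, 0 ≤ v N := by
      intro N
      refine tsum_nonneg fun i => by positivity
    have hbnd : ∀ N, ‖tail N * Q N‖ ≤ 9/4 * v N := by
      intro N
      have hsum_tail : Summable fun i : ℕ => g (i + (N+1)) :=
        (summable_nat_add_iff (f := g) (N+1)).mpr hgsum
      have hsum_b : Summable fun i : ℕ => ((i + (N+1) : ℕ) : ℝ) * |b (i + (N+1))| :=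
        (summable_nat_add_iff (f := fun m : ℕ => (m:ℝ) * |b m|) (N+1)).mpr hb
      have h1 : |tail N| ≤ ∑' i : ℕ, ‖g (i + (N+1))‖ := norm_tsum_le_tsum_norm hsum_tail.norm
      have h2 : ((N:ℝ)+1) * ∑' i : ℕ, ‖g (i + (N+1))‖ ≤ 3/2 * v N := by
        rw [← tsum_mul_left, hvdef, ← tsum_mul_left]
        refine Summable.tsum_le_tsum ?_ (hsum_tail.norm.mul_left _) (hsum_b.mul_left _)
        intro i
        have hg' : ‖g (i + (N+1))‖ ≤ 3/2 * |b (i + (N+1))| := by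
          rcases Nat.eq_zero_or_pos (i + (N+1)) with h0 | hpos
          · omega
          · have hm' : 1 ≤ i + (N+1) := hpos
            simp only [hgdef, if_pos hm', Real.norm_eq_abs, abs_mul]
            have := habs (i + (N+1))
            nlinarith [abs_nonneg (b (i + (N+1))), abs_nonneg (a (i + (N+1)))]
        have hcast : ((N:ℝ)+1) ≤ ((i + (N+1) : ℕ) : ℝ) := by
          push_cast; linarith [Nat.cast_nonneg (α := ℝ) i]
        have e1 : ((N:ℝ)+1) * ‖g (i + (N+1))‖ ≤ ((N:ℝ)+1) * (3/2 * |b (i + (N+1))|) :=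
          mul_le_mul_of_nonneg_left hg' (by positivity)
        have e3 : ((N:ℝ)+1) * |b (i + (N+1))| ≤ ((i + (N+1) : ℕ) : ℝ) * |b (i + (N+1))| :=
          mul_le_mul_of_nonneg_right hcast (abs_nonneg _)
        nlinarith
      have hQle : Q N ≤ 3/2 * ((N:ℝ)+1) := le_trans (hQub N) (by nlinarith [Nat.cast_nonneg (α := ℝ) N])
      have htail_nn : (0:ℝ) ≤ ∑' i : ℕ, ‖g (i + (N+1))‖ := tsum_nonneg fun i => norm_nonneg _
      rw [Real.norm_eq_abs, abs_mul, abs_of_nonneg (hQ0 N)]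
      have hN1 : (0:ℝ) < (N:ℝ)+1 := by positivity
      calc |tail N| * Q N ≤ (∑' i : ℕ, ‖g (i + (N+1))‖) * (3/2 * ((N:ℝ)+1)) := by
            apply mul_le_mul h1 hQle (hQ0 N) htail_nn
        _ = 3/2 * (((N:ℝ)+1) * ∑' i : ℕ, ‖g (i + (N+1))‖) := by ring
        _ ≤ 3/2 * (3/2 * v N) := by linarith
        _ ≤ 9/4 * v N := by linarith [hv_nonneg N]
    have h94 : Tendsto (fun N => 9/4 * v N) atTop (𝓝 0) := by
      have h := hv0.const_mul (9/4:ℝ)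
      rw [mul_zero] at h
      exact h
    exact squeeze_zero_norm hbnd h94
  -- combine
  set L : ℝ := lam * (-(α * T)) - lam * 0 - (α - 1) with hLdef
  have hRHS : Tendsto (fun N => lam * F N - lam * (tail N * Q N) - (a N - 1)) atTop (𝓝 L) := by
    exact ((hFtend.const_mul lam).sub (htail0.const_mul lam)).sub (htend.sub_const 1)
  have hcQ : Tendsto (fun N => c * Q N) atTop (𝓝 L) := by
    refine hRHS.congr' ?_
    filter_upwards [eventually_ge_atTop 1] with N hN
    exact (key N hN).symm
  have hc0 : c = 0 := by
    by_contra hc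
    rcases lt_or_gt_of_ne hc with hneg | hpos
    · have : Tendsto (fun N => c * Q N) atTop atBot := hQtop.const_mul_atTop_of_neg hneg
      exact not_tendsto_nhds_of_tendsto_atBot this L hcQ
    · have : Tendsto (fun N => c * Q N) atTop atTop := hQtop.const_mul_atTop hpos
      exact not_tendsto_nhds_of_tendsto_atTop this L hcQ
  have hL0 : L = 0 := by
    rw [hc0] at hcQ
    have hzero : Tendsto (fun N : ℕ => (0:ℝ) * Q N) atTop (𝓝 0) := by
      simp only [zero_mul]
      exact tendsto_const_nhds
    exact tendsto_nhds_unique hcQ hzero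
  have hmain : α * (1 + lam * T) = 1 := by
    rw [hLdef] at hL0
    nlinarith [hL0]
  field_simp
  linarith [hmain]
end

section
/- Let d ≥ 1 and η, θ ≥ 1/(2d). Then there is a constant K depending only on d such that for all x ∈ ℤ^d, ∑_{y∈ℤ^d} φ_η(y) φ_θ(x−y) ≤ K φ_{η+θ}(x), where φ_η(x) = (2πη)^{−d/2} exp(−|x|²/(2η)). -/
open Real

/-- The centered Gaussian density on `ℝ^d` with covariance `η·Id`, evaluated at lattice points. -/
noncomputable def gauss (d : ℕ) (η : ℝ) (x : Fin d → ℤ) : ℝ :=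
  (2 * Real.pi * η) ^ (-(d : ℝ) / 2) * Real.exp (-(∑ i, ((x i : ℝ)) ^ 2) / (2 * η))

open Real

lemma aux_inv_one_sub_exp {v : ℝ} (hv : 0 < v) :
    (1 - Real.exp (-v))⁻¹ ≤ 1 + 1 / v := by
  have h0 : Real.exp (-v) < 1 := Real.exp_lt_one_iff.2 (by linarith)
  have h2 : 0 < 1 - Real.exp (-v) := by linarith
  have h1 : (1 + v) * Real.exp (-v) ≤ 1 := by
    have := Real.add_one_le_exp v
    have hep := Real.exp_pos v
    rw [Real.exp_neg]
    rw [mul_inv_le_iff₀ hep]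
    linarith
  rw [inv_eq_one_div, div_le_iff₀ h2]
  have hvne : v ≠ 0 := ne_of_gt hv
  field_simp
  nlinarith [h1, hv, Real.exp_pos (-v)]
open Real

lemma aux_nat_sum {u : ℝ} (hu : 0 < u) :
    Summable (fun n : ℕ => Real.exp (-((n : ℝ) + 1) ^ 2 * u)) ∧
    ∑' n : ℕ, Real.exp (-((n : ℝ) + 1) ^ 2 * u) ≤ Real.exp 1 * (1 + 1 / Real.sqrt u) := by
  set v := Real.sqrt u with hv_def
  have hv : 0 < v := Real.sqrt_pos.2 hu
  have hvv : v * v = u := Real.mul_self_sqrt hu.le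
  set r := Real.exp (-v) with hr_def
  have hr0 : 0 ≤ r := (Real.exp_pos _).le
  have hr1 : r < 1 := Real.exp_lt_one_iff.2 (by linarith)
  have hle : ∀ n : ℕ, Real.exp (-((n : ℝ) + 1) ^ 2 * u) ≤ (Real.exp (1 + v) * r) * r ^ n := by
    intro n
    have : (Real.exp (1 + v) * r) * r ^ n = Real.exp ((1 + v) + (-v) + (n : ℝ) * (-v)) := by
      rw [hr_def, ← Real.exp_nat_mul, ← Real.exp_add, ← Real.exp_add]
    rw [this, Real.exp_le_exp]
    nlinarith [sq_nonneg (((n : ℝ) + 1) * v - 1), Nat.cast_nonneg (α := ℝ) n, hv.le,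
      mul_nonneg (Nat.cast_nonneg n) hv.le]
  have hgs : Summable (fun n : ℕ => (Real.exp (1 + v) * r) * r ^ n) :=
    (summable_geometric_of_lt_one hr0 hr1).mul_left _
  have hs : Summable (fun n : ℕ => Real.exp (-((n : ℝ) + 1) ^ 2 * u)) :=
    Summable.of_nonneg_of_le (fun n => (Real.exp_pos _).le) hle hgs
  refine ⟨hs, ?_⟩
  calc ∑' n : ℕ, Real.exp (-((n : ℝ) + 1) ^ 2 * u)
      ≤ ∑' n : ℕ, (Real.exp (1 + v) * r) * r ^ n := Summable.tsum_le_tsum hle hs hgs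
    _ = (Real.exp (1 + v) * r) * (1 - r)⁻¹ := by
        rw [tsum_mul_left, tsum_geometric_of_lt_one hr0 hr1]
    _ = Real.exp 1 * (1 - r)⁻¹ := by
        rw [hr_def, ← Real.exp_add, show 1 + v + -v = 1 by ring]
    _ ≤ Real.exp 1 * (1 + 1 / v) := by
        exact mul_le_mul_of_nonneg_left (aux_inv_one_sub_exp hv) (Real.exp_pos 1).le

set_option maxHeartbeats 1000000 in
lemma aux_int_sum {u : ℝ} (hu : 0 < u) :
    Summable (fun k : ℤ => Real.exp (-(k : ℝ) ^ 2 * u)) ∧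
    ∑' k : ℤ, Real.exp (-(k : ℝ) ^ 2 * u) ≤
      1 + 2 * (Real.exp 1 * (1 + 1 / Real.sqrt u)) := by
  obtain ⟨hs1, hb1⟩ := aux_nat_sum hu
  have hnat : Summable (fun n : ℕ => Real.exp (-(n : ℝ) ^ 2 * u)) := by
    rw [← summable_nat_add_iff (f := fun n : ℕ => Real.exp (-(n : ℝ) ^ 2 * u)) 1]
    refine hs1.congr fun n => ?_
    push_cast
    ring_nf
  have hneg : (fun n : ℕ => Real.exp (-((-(n + 1) : ℤ) : ℝ) ^ 2 * u)) =
      (fun n : ℕ => Real.exp (-((n : ℝ) + 1) ^ 2 * u)) := by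
    funext n; push_cast; ring_nf
  have hnat' : Summable (fun n : ℕ => Real.exp (-((n : ℤ) : ℝ) ^ 2 * u)) := by
    refine hnat.congr fun n => ?_; push_cast; ring_nf
  have hs : Summable (fun k : ℤ => Real.exp (-(k : ℝ) ^ 2 * u)) := by
    refine Summable.of_nat_of_neg_add_one hnat' ?_
    rw [hneg]; exact hs1
  refine ⟨hs, ?_⟩
  rw [tsum_of_nat_of_neg_add_one hnat' (by rw [hneg]; exact hs1)]
  rw [hneg]
  have h0 : ∑' n : ℕ, Real.exp (-((n : ℤ) : ℝ) ^ 2 * u)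
      = 1 + ∑' n : ℕ, Real.exp (-((n : ℝ) + 1) ^ 2 * u) := by
    rw [Summable.tsum_eq_zero_add hnat']
    congr 1
    · norm_num
    · refine tsum_congr fun n => ?_; push_cast; ring_nf
  rw [h0]
  linarith

lemma aux_shift_sum {t c : ℝ} (ht : 0 < t) :
    Summable (fun n : ℤ => Real.exp (-((n : ℝ) - c) ^ 2 * t)) ∧
    ∑' n : ℤ, Real.exp (-((n : ℝ) - c) ^ 2 * t) ≤
      1 + 2 * (Real.exp 1 * (1 + 2 / Real.sqrt t)) := by
  have ht4 : 0 < t / 4 := by linarith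
  obtain ⟨hsi, hbi⟩ := aux_int_sum ht4
  set m := round c with hm_def
  have hmaj : Summable (fun n : ℤ => Real.exp (-((n - m : ℤ) : ℝ) ^ 2 * (t / 4))) := by
    have := hsi.comp_injective (Equiv.subRight m).injective
    refine this.congr fun n => ?_
    simp [Equiv.subRight]
  have hle : ∀ n : ℤ, Real.exp (-((n : ℝ) - c) ^ 2 * t) ≤
      Real.exp (-((n - m : ℤ) : ℝ) ^ 2 * (t / 4)) := by
    intro n
    rw [Real.exp_le_exp]
    rcases eq_or_ne n m with h | h
    · rw [h]
      simp only [sub_self, Int.cast_zero]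
      nlinarith [mul_nonneg (sq_nonneg ((m : ℝ) - c)) ht.le]
    · have hq : |c - (m : ℝ)| ≤ 1 / 2 := by
        rw [hm_def]; exact abs_sub_round c
      have hq2 : (c - (m : ℝ)) ^ 2 ≤ 1 / 4 := by
        nlinarith [sq_abs (c - (m : ℝ)), abs_nonneg (c - (m : ℝ))]
      have hp1 : (1 : ℝ) ≤ |((n - m : ℤ) : ℝ)| := by
        rw [← Int.cast_abs]
        exact_mod_cast Int.one_le_abs (sub_ne_zero.2 h)
      have hp2 : (1 : ℝ) ≤ ((n : ℝ) - (m : ℝ)) ^ 2 := by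
        have hc : ((n - m : ℤ) : ℝ) = (n : ℝ) - (m : ℝ) := by push_cast; ring
        rw [← hc, ← sq_abs]
        nlinarith [hp1]
      have key : ((n : ℝ) - (m : ℝ)) ^ 2 ≤ 4 * ((n : ℝ) - c) ^ 2 := by
        nlinarith [sq_nonneg ((n : ℝ) - (m : ℝ) - 2 * (c - (m : ℝ)))]
      have key2 : ((n : ℝ) - (m : ℝ)) ^ 2 * t ≤ 4 * ((n : ℝ) - c) ^ 2 * t :=
        mul_le_mul_of_nonneg_right key ht.le
      push_cast
      linarith
  have hs : Summable (fun n : ℤ => Real.exp (-((n : ℝ) - c) ^ 2 * t)) :=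
    Summable.of_nonneg_of_le (fun n => (Real.exp_pos _).le) hle hmaj
  refine ⟨hs, ?_⟩
  have h1 : ∑' n : ℤ, Real.exp (-((n : ℝ) - c) ^ 2 * t) ≤
      ∑' n : ℤ, Real.exp (-((n - m : ℤ) : ℝ) ^ 2 * (t / 4)) := Summable.tsum_le_tsum hle hs hmaj
  have h2 : ∑' n : ℤ, Real.exp (-((n - m : ℤ) : ℝ) ^ 2 * (t / 4)) =
      ∑' k : ℤ, Real.exp (-((k : ℤ) : ℝ) ^ 2 * (t / 4)) := by
    rw [← (Equiv.subRight m).tsum_eq (fun k : ℤ => Real.exp (-((k : ℤ) : ℝ) ^ 2 * (t / 4)))]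
    rfl
  have h3 : Real.sqrt (t / 4) = Real.sqrt t / 2 := by
    rw [show t / 4 = t / 2 ^ 2 by ring, Real.sqrt_div ht.le,
      Real.sqrt_sq (by norm_num : (0:ℝ) ≤ 2)]
  have h4 : 1 / Real.sqrt (t / 4) = 2 / Real.sqrt t := by
    rw [h3]; field_simp
  calc ∑' n : ℤ, Real.exp (-((n : ℝ) - c) ^ 2 * t)
      ≤ ∑' k : ℤ, Real.exp (-((k : ℤ) : ℝ) ^ 2 * (t / 4)) := h1.trans (le_of_eq h2)
    _ ≤ 1 + 2 * (Real.exp 1 * (1 + 1 / Real.sqrt (t / 4))) := hbi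
    _ = 1 + 2 * (Real.exp 1 * (1 + 2 / Real.sqrt t)) := by rw [h4]

open scoped ENNReal in
lemma aux_pi_tsum : ∀ (d : ℕ) (g : Fin d → ℤ → ℝ≥0∞),
    ∑' y : Fin d → ℤ, ∏ i, g i (y i) = ∏ i, ∑' n : ℤ, g i n := by
  intro d
  induction d with
  | zero =>
    intro g
    simp [tsum_eq_single (fun (i : Fin 0) => (0 : ℤ))
      (fun y hy => absurd (funext fun i => i.elim0) hy)]
  | succ n ih =>
    intro g
    rw [← (Fin.consEquiv (fun _ : Fin (n + 1) => ℤ)).tsum_eq, ENNReal.tsum_prod']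
    have h1 : ∀ (a : ℤ) (z : Fin n → ℤ),
        ∏ i, g i ((Fin.consEquiv (fun _ : Fin (n + 1) => ℤ)) (a, z) i)
          = g 0 a * ∏ i : Fin n, g i.succ (z i) := by
      intro a z
      rw [Fin.prod_univ_succ]
      congr 1
    simp only [h1]
    rw [Fin.prod_univ_succ]
    calc ∑' (a : ℤ), ∑' (z : Fin n → ℤ), g 0 a * ∏ i : Fin n, g i.succ (z i)
        = ∑' (a : ℤ), g 0 a * ∑' (z : Fin n → ℤ), ∏ i : Fin n, g i.succ (z i) := by
          congr 1; funext a; rw [ENNReal.tsum_mul_left]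
      _ = (∑' a : ℤ, g 0 a) * ∑' (z : Fin n → ℤ), ∏ i : Fin n, g i.succ (z i) := by
          rw [ENNReal.tsum_mul_right]
      _ = (∑' a : ℤ, g 0 a) * ∏ i : Fin n, ∑' m : ℤ, g i.succ m := by
          rw [ih (fun i => g i.succ)]

lemma aux_tsum_real_le {ι : Type*} {f : ι → ℝ} {c : ℝ} (hf : ∀ i, 0 ≤ f i) (hc : 0 ≤ c)
    (h : ∑' i, ENNReal.ofReal (f i) ≤ ENNReal.ofReal c) : ∑' i, f i ≤ c := by
  by_cases hs : Summable f
  · rw [← ENNReal.ofReal_le_ofReal_iff hc, ENNReal.ofReal_tsum_of_nonneg hf hs]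
    exact h
  · rw [tsum_eq_zero_of_not_summable hs]; exact hc

lemma aux_pointwise (d : ℕ) (η θ : ℝ) (hη : 0 < η) (hθ : 0 < θ) (x y : Fin d → ℤ) :
    gauss d η y * gauss d θ (x - y) =
      gauss d (η + θ) x * ((2 * Real.pi * (η * θ / (η + θ))) ^ (-(d : ℝ) / 2) *
        ∏ i, Real.exp (-(((y i : ℝ)) - η * (x i : ℝ) / (η + θ)) ^ 2 *
          ((η + θ) / (2 * (η * θ))))) := by
  have hp : 0 < η + θ := by linarith
  have hpi := Real.pi_pos
  have hs : 0 < η * θ / (η + θ) := by positivity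
  unfold gauss
  rw [← Real.exp_sum]
  rw [mul_mul_mul_comm, mul_mul_mul_comm ((2 * Real.pi * (η + θ)) ^ (-(d : ℝ) / 2))]
  congr 1
  · rw [← Real.mul_rpow (by positivity) (by positivity),
      ← Real.mul_rpow (by positivity) (by positivity)]
    congr 1
    field_simp
  · rw [← Real.exp_add, ← Real.exp_add]
    congr 1
    simp only [Pi.sub_apply, Int.cast_sub]
    rw [neg_div, neg_div, neg_div, Finset.sum_div, Finset.sum_div, Finset.sum_div,
      ← Finset.sum_neg_distrib, ← Finset.sum_neg_distrib, ← Finset.sum_neg_distrib,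
      ← Finset.sum_add_distrib, ← Finset.sum_add_distrib]
    refine Finset.sum_congr rfl fun i _ => ?_
    field_simp
    ring

lemma gauss_pos (d : ℕ) {η : ℝ} (hη : 0 < η) (x : Fin d → ℤ) : 0 < gauss d η x := by
  unfold gauss
  have := Real.pi_pos
  exact mul_pos (Real.rpow_pos_of_pos (by positivity) _) (Real.exp_pos _)


set_option maxHeartbeats 1000000 in
/-- For `η, θ ≥ 1/(2d)`, the discrete convolution of two Gaussian densities is bounded by
a constant (depending only on `d`) times the Gaussian density with variance `η + θ`. -/
theorem discrete_gaussian_convolution (d : ℕ) (hd : 1 ≤ d) :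
    ∃ K : ℝ, 0 < K ∧ ∀ η θ : ℝ, 1 / (2 * d) ≤ η → 1 / (2 * d) ≤ θ →
      ∀ x : Fin d → ℤ,
        (∑' y : Fin d → ℤ, gauss d η y * gauss d θ (x - y)) ≤ K * gauss d (η + θ) x := by
  have hd1 : (1 : ℝ) ≤ (d : ℝ) := by exact_mod_cast hd
  have hd0 : (0 : ℝ) < (d : ℝ) := by linarith
  refine ⟨(100 * (d : ℝ)) ^ d, by positivity, ?_⟩
  intro η θ hη hθ x
  have hπ := Real.pi_pos
  have hπ3 := Real.pi_gt_three
  have h2d : (0 : ℝ) < 1 / (2 * (d : ℝ)) := by positivity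
  have hη0 : 0 < η := lt_of_lt_of_le h2d hη
  have hθ0 : 0 < θ := lt_of_lt_of_le h2d hθ
  have hp : 0 < η + θ := by linarith
  set s : ℝ := η * θ / (η + θ) with hs_def
  set t : ℝ := (η + θ) / (2 * (η * θ)) with ht_def
  have hs : 0 < s := by positivity
  have ht : 0 < t := by positivity
  set e : ℝ := Real.exp 1 with he_def
  have he0 : 0 < e := Real.exp_pos 1
  have he3 : e ≤ 3 := by
    have := Real.exp_one_lt_d9
    rw [he_def]; linarith
  set A : ℝ := Real.sqrt (2 * Real.pi * s) with hA_def
  set B : ℝ := Real.sqrt t with hB_def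
  have hA : 0 < A := Real.sqrt_pos.2 (by positivity)
  have hB : 0 < B := Real.sqrt_pos.2 ht
  set M : ℝ := 1 + 2 * (e * (1 + 2 / B)) with hM_def
  have hM0 : 0 ≤ M := by positivity
  set G : ℝ := gauss d (η + θ) x with hG_def
  have hG : 0 < G := gauss_pos d hp x
  set P : ℝ := (2 * Real.pi * s) ^ (-(d : ℝ) / 2) with hP_def
  have hP : 0 < P := Real.rpow_pos_of_pos (by positivity) _
  -- scalar bound
  have h1η : 1 ≤ 2 * (d : ℝ) * η := by
    rw [div_le_iff₀ (by positivity)] at hη; linarith [hη]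
  have h1θ : 1 ≤ 2 * (d : ℝ) * θ := by
    rw [div_le_iff₀ (by positivity)] at hθ; linarith [hθ]
  have h4d : η + θ ≤ 4 * (d : ℝ) * (η * θ) := by
    nlinarith [mul_nonneg (sub_nonneg.2 h1η) (sub_nonneg.2 h1θ),
      mul_le_mul h1η h1θ (by norm_num) (by positivity)]
  have hsge : 1 / (4 * (d : ℝ)) ≤ s := by
    rw [hs_def, div_le_div_iff₀ (by positivity) hp]
    linarith
  have hA2 : 1 / (d : ℝ) ≤ 2 * Real.pi * s := by
    have h6 : (6 : ℝ) * (1 / (4 * (d : ℝ))) ≤ 2 * Real.pi * s := by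
      have := mul_le_mul (by linarith : (6 : ℝ) ≤ 2 * Real.pi) hsge (by positivity)
        (by positivity)
      linarith
    have h7 : (6 : ℝ) * (1 / (4 * (d : ℝ))) = (3 / 2) * (1 / d) := by ring
    have h8 : (0 : ℝ) ≤ 1 / d := by positivity
    linarith
  have hinvA : A⁻¹ ≤ (d : ℝ) := by
    have hsq : (1 : ℝ) ≤ Real.sqrt (d : ℝ) * A := by
      rw [hA_def, ← Real.sqrt_mul hd0.le]
      have : (1 : ℝ) ≤ (d : ℝ) * (2 * Real.pi * s) := by
        have := mul_le_mul_of_nonneg_left hA2 hd0.le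
        rw [mul_one_div, div_self (ne_of_gt hd0)] at this
        linarith
      calc (1 : ℝ) = Real.sqrt 1 := Real.sqrt_one.symm
        _ ≤ Real.sqrt ((d : ℝ) * (2 * Real.pi * s)) := Real.sqrt_le_sqrt this
    have h9 : A⁻¹ ≤ Real.sqrt (d : ℝ) := by
      rw [inv_eq_one_div, div_le_iff₀ hA]
      linarith
    refine h9.trans ?_
    calc Real.sqrt (d : ℝ) ≤ Real.sqrt ((d : ℝ) ^ 2) := Real.sqrt_le_sqrt (by nlinarith)
      _ = (d : ℝ) := Real.sqrt_sq hd0.le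
  have hAB : A * B = Real.sqrt Real.pi := by
    rw [hA_def, hB_def, ← Real.sqrt_mul (by positivity)]
    congr 1
    rw [hs_def, ht_def]
    field_simp
  have hABinv : (A * B)⁻¹ ≤ 1 := by
    rw [hAB]
    have : (1 : ℝ) ≤ Real.sqrt Real.pi := by
      calc (1 : ℝ) = Real.sqrt 1 := Real.sqrt_one.symm
        _ ≤ Real.sqrt Real.pi := Real.sqrt_le_sqrt (by linarith)
    rw [inv_le_one_iff₀]
    right; exact this
  have hperfac : A⁻¹ * M ≤ 100 * (d : ℝ) := by
    have hexp : A⁻¹ * M = (1 + 2 * e) * A⁻¹ + 4 * e * (A * B)⁻¹ := by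
      rw [hM_def]
      field_simp
      ring
    rw [hexp]
    have t1 : (1 + 2 * e) * A⁻¹ ≤ (1 + 2 * e) * (d : ℝ) :=
      mul_le_mul_of_nonneg_left hinvA (by positivity)
    have t2 : 4 * e * (A * B)⁻¹ ≤ 4 * e := by
      nlinarith [hABinv, he0]
    have t3 : (1 + 2 * e) * (d : ℝ) ≤ 7 * (d : ℝ) :=
      mul_le_mul_of_nonneg_right (by linarith) hd0.le
    have t4 : (4 : ℝ) * e ≤ 12 := by linarith
    have t5 : (12 : ℝ) ≤ 12 * (d : ℝ) := by linarith
    linarith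
  have hPeq : P = (A⁻¹) ^ d := by
    rw [hP_def, hA_def, show -(d : ℝ) / 2 = (-(1 / 2) : ℝ) * (d : ℕ) by push_cast; ring,
      Real.rpow_mul (by positivity), Real.rpow_natCast]
    congr 1
    rw [Real.rpow_neg (by positivity), Real.sqrt_eq_rpow]
  have hscalar : P * M ^ d ≤ (100 * (d : ℝ)) ^ d := by
    rw [hPeq, ← mul_pow]
    exact pow_le_pow_left₀ (by positivity) hperfac d
  -- main ENNReal estimate
  have hf : ∀ y : Fin d → ℤ, 0 ≤ gauss d η y * gauss d θ (x - y) :=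
    fun y => (mul_pos (gauss_pos d hη0 y) (gauss_pos d hθ0 _)).le
  refine aux_tsum_real_le hf (by positivity) ?_
  have key : ∑' y : Fin d → ℤ, ENNReal.ofReal (gauss d η y * gauss d θ (x - y))
      ≤ ENNReal.ofReal (G * (P * M ^ d)) := by
    calc ∑' y : Fin d → ℤ, ENNReal.ofReal (gauss d η y * gauss d θ (x - y))
        = ∑' y : Fin d → ℤ, (ENNReal.ofReal G * (ENNReal.ofReal P *
            ∏ i, ENNReal.ofReal (Real.exp (-(((y i : ℝ)) - η * (x i : ℝ) / (η + θ)) ^ 2 * t)))) := by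
          refine tsum_congr fun y => ?_
          rw [aux_pointwise d η θ hη0 hθ0 x y]
          rw [ENNReal.ofReal_mul hG.le, ENNReal.ofReal_mul hP.le,
            ENNReal.ofReal_prod_of_nonneg (fun i _ => (Real.exp_pos _).le)]
      _ = ENNReal.ofReal G * (ENNReal.ofReal P *
            ∑' y : Fin d → ℤ, ∏ i, ENNReal.ofReal
              (Real.exp (-(((y i : ℝ)) - η * (x i : ℝ) / (η + θ)) ^ 2 * t))) := by
          rw [ENNReal.tsum_mul_left, ENNReal.tsum_mul_left]
      _ = ENNReal.ofReal G * (ENNReal.ofReal P *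
            ∏ i, ∑' n : ℤ, ENNReal.ofReal
              (Real.exp (-(((n : ℝ)) - η * (x i : ℝ) / (η + θ)) ^ 2 * t))) := by
          rw [aux_pi_tsum d (fun i n => ENNReal.ofReal
            (Real.exp (-(((n : ℝ)) - η * (x i : ℝ) / (η + θ)) ^ 2 * t)))]
      _ ≤ ENNReal.ofReal G * (ENNReal.ofReal P * ∏ _i : Fin d, ENNReal.ofReal M) := by
          gcongr with i _
          rw [← ENNReal.ofReal_tsum_of_nonneg (fun n => (Real.exp_pos _).le)
            (aux_shift_sum (c := η * (x i : ℝ) / (η + θ)) ht).1]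
          exact ENNReal.ofReal_le_ofReal
            ((aux_shift_sum (c := η * (x i : ℝ) / (η + θ)) ht).2.trans (by rw [hM_def, hB_def]))
      _ = ENNReal.ofReal G * (ENNReal.ofReal P * (ENNReal.ofReal M) ^ d) := by
          rw [Finset.prod_const, Finset.card_univ, Fintype.card_fin]
      _ = ENNReal.ofReal (G * (P * M ^ d)) := by
          rw [← ENNReal.ofReal_pow hM0, ← ENNReal.ofReal_mul hP.le, ← ENNReal.ofReal_mul hG.le]
  refine key.trans (ENNReal.ofReal_le_ofReal ?_)
  calc G * (P * M ^ d) ≤ G * (100 * (d : ℝ)) ^ d :=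
        mul_le_mul_of_nonneg_left hscalar hG.le
    _ = (100 * (d : ℝ)) ^ d * G := mul_comm _ _
end

section
/- Let η > 0, n ∈ ℕ, and 0 < k < n. Then φ_{(n−k)η}(x) = φ_{nη}(x) − (k/(2n))·[x²/(nη) − d]·φ_{nη}(x) + S(x), where the remainder satisfies |S(x)| ≤ K(d,η)·(k/(n−k))²·(n/(n−k))^{d/2}·φ_{√2 nη}(x) for all x ∈ ℤ^d, with K(d,η) depending only on d and η. -/
private noncomputable def gf (A B p t : ℝ) : ℝ := A * t ^ (-p) * Real.exp (-B / t)
private noncomputable def gf1 (A B p t : ℝ) : ℝ :=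
  A * t ^ (-p - 1) * Real.exp (-B / t) * (B / t - p)
private noncomputable def gf2 (A B p t : ℝ) : ℝ :=
  A * t ^ (-p - 2) * Real.exp (-B / t) *
    ((B / t) ^ 2 - (2 * p + 2) * (B / t) + p * (p + 1))

private lemma hasDerivAt_gf (A B p : ℝ) {t : ℝ} (ht : 0 < t) :
    HasDerivAt (gf A B p) (gf1 A B p t) t := by
  have ht' : t ≠ 0 := ne_of_gt ht
  have h1 : HasDerivAt (fun s : ℝ => s ^ (-p)) (-p * t ^ (-p - 1)) t :=
    Real.hasDerivAt_rpow_const (Or.inl ht')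
  have h2 : HasDerivAt (fun s : ℝ => Real.exp (-B / s)) (Real.exp (-B / t) * (B / t ^ 2)) t := by
    have hi : HasDerivAt (fun s : ℝ => -B / s) (B / t ^ 2) t := by
      have := (hasDerivAt_inv ht').const_mul (-B)
      simpa [div_eq_mul_inv, neg_mul, mul_comm] using this
    simpa using hi.exp
  have h := ((h1.const_mul A).mul h2)
  refine h.congr_deriv ?_
  unfold gf1
  have e1 : t ^ (-p) = t ^ (-p - 1) * t := by
    rw [← Real.rpow_add_one ht']; ring_nf
  rw [e1]
  field_simp
  ring

private lemma hasDerivAt_gf1 (A B p : ℝ) {t : ℝ} (ht : 0 < t) :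
    HasDerivAt (gf1 A B p) (gf2 A B p t) t := by
  have ht' : t ≠ 0 := ne_of_gt ht
  have h1 : HasDerivAt (fun s : ℝ => s ^ (-p - 1)) ((-p - 1) * t ^ (-p - 1 - 1)) t :=
    Real.hasDerivAt_rpow_const (Or.inl ht')
  have hi : HasDerivAt (fun s : ℝ => -B / s) (B / t ^ 2) t := by
    have := (hasDerivAt_inv ht').const_mul (-B)
    simpa [div_eq_mul_inv, neg_mul, mul_comm] using this
  have h2 : HasDerivAt (fun s : ℝ => Real.exp (-B / s)) (Real.exp (-B / t) * (B / t ^ 2)) t := by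
    simpa using hi.exp
  have h3 : HasDerivAt (fun s : ℝ => B / s - p) (-B / t ^ 2) t := by
    have h : HasDerivAt (fun s : ℝ => B / s) (-B / t ^ 2) t := by
      have := (hasDerivAt_inv ht').const_mul B
      simpa [div_eq_mul_inv, neg_mul, mul_comm] using this
    simpa using h.sub_const p
  have h := (((h1.const_mul A).mul h2).mul h3)
  refine h.congr_deriv ?_
  simp only [Pi.mul_apply]
  unfold gf2
  have e1 : t ^ (-p - 1) = t ^ (-p - 2) * t := by
    rw [← Real.rpow_add_one ht']; ring_nf
  have e2 : t ^ (-p - 1 - 1) = t ^ (-p - 2) := by ring_nf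
  rw [e2, e1]
  field_simp
  ring

/-- Second-order Taylor bound via two mean-value applications. -/
private lemma taylor_bound (A B p : ℝ) {a b M : ℝ} (ha : 0 < a) (hab : a ≤ b)
    (hM : ∀ t ∈ Set.Icc a b, |gf2 A B p t| ≤ M) :
    |gf A B p a - gf A B p b + (b - a) * gf1 A B p b| ≤ M * (b - a) ^ 2 := by
  have hM0 : 0 ≤ M := le_trans (abs_nonneg _) (hM a ⟨le_refl _, hab⟩)
  have hs : Convex ℝ (Set.Icc a b) := convex_Icc a b
  have hbmem : b ∈ Set.Icc a b := ⟨hab, le_refl _⟩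
  have hpos : ∀ t ∈ Set.Icc a b, 0 < t := fun t ht => lt_of_lt_of_le ha ht.1
  have h1 : ∀ t ∈ Set.Icc a b, ‖gf1 A B p t - gf1 A B p b‖ ≤ M * (b - a) := by
    intro t ht
    have := hs.norm_image_sub_le_of_norm_hasDerivWithin_le
      (f := gf1 A B p) (f' := gf2 A B p)
      (fun s hs' => (hasDerivAt_gf1 A B p (hpos s hs')).hasDerivWithinAt)
      (fun s hs' => by simpa [Real.norm_eq_abs] using hM s hs') hbmem ht
    refine this.trans ?_
    have : ‖t - b‖ ≤ b - a := by
      rw [Real.norm_eq_abs, abs_sub_comm, abs_of_nonneg (by linarith [ht.2])]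
      linarith [ht.1]
    nlinarith
  have h2 := hs.norm_image_sub_le_of_norm_hasDerivWithin_le
    (f := fun t => gf A B p t - t * gf1 A B p b)
    (f' := fun t => gf1 A B p t - gf1 A B p b)
    (fun s hs' => (((hasDerivAt_gf A B p (hpos s hs')).sub
      ((hasDerivAt_id s).mul_const (gf1 A B p b))).congr_deriv (by ring)).hasDerivWithinAt)
    h1 hbmem ⟨le_refl _, hab⟩
  rw [Real.norm_eq_abs] at h2
  have he : gf A B p a - a * gf1 A B p b - (gf A B p b - b * gf1 A B p b)
      = gf A B p a - gf A B p b + (b - a) * gf1 A B p b := by ring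
  rw [he] at h2
  refine h2.trans ?_
  rw [Real.norm_eq_abs, abs_sub_comm, abs_of_nonneg (by linarith)]
  nlinarith

private lemma gf2_bound (A B p : ℝ) (hA : 0 < A) (hB : 0 ≤ B) (hp : 0 < p) {a b : ℝ}
    (ha : 0 < a) {t : ℝ} (ht : t ∈ Set.Icc a b) :
    |gf2 A B p t| ≤ (128 + 2 * (p + 1) ^ 2) * A * a ^ (-p - 2) *
      Real.exp (-(B / (Real.sqrt 2 * b))) := by
  obtain ⟨ht1, ht2⟩ := ht
  have ht0 : 0 < t := lt_of_lt_of_le ha ht1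
  have hb0 : 0 < b := lt_of_lt_of_le ht0 ht2
  set u : ℝ := B / t with hu_def
  have hu : 0 ≤ u := div_nonneg hB ht0.le
  have hrp : 0 < t ^ (-p - 2) := Real.rpow_pos_of_pos ht0 _
  have hsqrt2 : (1.4 : ℝ) ≤ Real.sqrt 2 := by
    nlinarith [Real.sq_sqrt (by norm_num : (0:ℝ) ≤ 2), Real.sqrt_nonneg 2]
  have hsqrt2' : 0 < Real.sqrt 2 := by linarith
  have h1 : |u ^ 2 - (2 * p + 2) * u + p * (p + 1)| ≤ (u + p + 1) ^ 2 :=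
    abs_le.mpr ⟨by nlinarith, by nlinarith⟩
  have h2 : (u + p + 1) ^ 2 ≤ (128 + 2 * (p + 1) ^ 2) * Real.exp (u / 4) := by
    have he : u / 8 + 1 ≤ Real.exp (u / 8) := Real.add_one_le_exp (u / 8)
    rw [show u / 4 = u / 8 + u / 8 by ring, Real.exp_add, ← sq]
    have hee : (u / 8 + 1) ^ 2 ≤ Real.exp (u / 8) ^ 2 := by nlinarith [he, hu]
    nlinarith [hee, sq_nonneg (u - p - 1), hu,
      mul_nonneg (sq_nonneg (p + 1)) (show (0:ℝ) ≤ (u / 8 + 1) ^ 2 - 1 by nlinarith)]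
  have h3 : Real.exp (u / 4) * Real.exp (-(B / t)) ≤ Real.exp (-(B / (Real.sqrt 2 * b))) := by
    rw [← Real.exp_add]
    apply Real.exp_le_exp.mpr
    have e1 : B / (Real.sqrt 2 * b) ≤ B / (Real.sqrt 2 * t) := by
      apply div_le_div_of_nonneg_left hB (by positivity)
      nlinarith
    have e2 : B / (Real.sqrt 2 * t) ≤ 3 / 4 * u := by
      rw [hu_def]
      rw [div_le_iff₀ (by positivity)] at *
      have : B = B / t * t := by field_simp
      nlinarith [div_nonneg hB ht0.le]
    linarith
  have h4 : t ^ (-p - 2) ≤ a ^ (-p - 2) :=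
    Real.rpow_le_rpow_of_nonpos ha ht1 (by linarith)
  have harp : 0 < a ^ (-p - 2) := Real.rpow_pos_of_pos ha _
  have key : |gf2 A B p t| = A * t ^ (-p - 2) * Real.exp (-(B / t)) *
      |u ^ 2 - (2 * p + 2) * u + p * (p + 1)| := by
    unfold gf2
    rw [abs_mul, abs_mul, abs_mul, abs_of_pos hA, abs_of_pos hrp,
      abs_of_pos (Real.exp_pos _), neg_div]
  rw [key]
  calc A * t ^ (-p - 2) * Real.exp (-(B / t)) * |u ^ 2 - (2 * p + 2) * u + p * (p + 1)|
      ≤ A * a ^ (-p - 2) * (Real.exp (-(B / t)) * ((128 + 2 * (p + 1) ^ 2) * Real.exp (u / 4))) := by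
        have hx : Real.exp (-(B / t)) * |u ^ 2 - (2 * p + 2) * u + p * (p + 1)|
            ≤ Real.exp (-(B / t)) * ((128 + 2 * (p + 1) ^ 2) * Real.exp (u / 4)) := by
          apply mul_le_mul_of_nonneg_left (h1.trans h2) (Real.exp_pos _).le
        calc A * t ^ (-p - 2) * Real.exp (-(B / t)) * |u ^ 2 - (2 * p + 2) * u + p * (p + 1)|
            = A * t ^ (-p - 2) * (Real.exp (-(B / t)) * |u ^ 2 - (2 * p + 2) * u + p * (p + 1)|) := by
              ring
          _ ≤ A * a ^ (-p - 2) *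
              (Real.exp (-(B / t)) * ((128 + 2 * (p + 1) ^ 2) * Real.exp (u / 4))) := by
              apply mul_le_mul (by nlinarith) hx (by positivity) (by positivity)
    _ ≤ (128 + 2 * (p + 1) ^ 2) * A * a ^ (-p - 2) * Real.exp (-(B / (Real.sqrt 2 * b))) := by
        have hrw : Real.exp (-(B / t)) * ((128 + 2 * (p + 1) ^ 2) * Real.exp (u / 4))
            = (128 + 2 * (p + 1) ^ 2) * (Real.exp (u / 4) * Real.exp (-(B / t))) := by ring
        rw [hrw]
        have h5 : A * a ^ (-p - 2) *
            ((128 + 2 * (p + 1) ^ 2) * (Real.exp (u / 4) * Real.exp (-(B / t))))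
            ≤ A * a ^ (-p - 2) *
              ((128 + 2 * (p + 1) ^ 2) * Real.exp (-(B / (Real.sqrt 2 * b)))) := by
          refine mul_le_mul_of_nonneg_left ?_ (by positivity)
          exact mul_le_mul_of_nonneg_left h3 (by positivity)
        exact h5.trans_eq (by ring)

private lemma gauss_eq_gf (d : ℕ) (η : ℝ) (hη : 0 < η) (x : Fin d → ℤ) {t : ℝ} (ht : 0 < t) :
    gauss d (t * η) x
      = gf ((2 * Real.pi * η) ^ (-((d:ℝ)/2))) ((∑ i, ((x i : ℝ)) ^ 2) / (2 * η)) ((d:ℝ)/2) t := by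
  unfold gauss gf
  have hπ : 0 < Real.pi := Real.pi_pos
  congr 1
  · rw [show 2 * Real.pi * (t * η) = (2 * Real.pi * η) * t by ring,
      Real.mul_rpow (by positivity) ht.le, show -(d:ℝ)/2 = -((d:ℝ)/2) by ring]
  · rw [neg_div, neg_div, div_div, show 2 * (t * η) = 2 * η * t by ring]

/-- Taylor expansion in the variance variable: for `0 < k < n`,
`φ_{(n-k)η}(x) = φ_{nη}(x) - (k/(2n))[x²/(nη) - d]φ_{nη}(x) + S(x)` with
`|S(x)| ≤ K(d,η) (k/(n-k))² (n/(n-k))^{d/2} φ_{√2 nη}(x)`. -/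
theorem gaussian_variance_taylor (d : ℕ) (hd : 1 ≤ d) (η : ℝ) (hη : 0 < η) :
    ∃ K : ℝ, 0 < K ∧ ∀ n k : ℕ, 0 < k → k < n → ∀ x : Fin d → ℤ,
      |gauss d (((n : ℝ) - k) * η) x -
        (gauss d (n * η) x -
          ((k : ℝ) / (2 * n)) * ((∑ i, ((x i : ℝ)) ^ 2) / (n * η) - d) * gauss d (n * η) x)|
        ≤ K * ((k : ℝ) / ((n : ℝ) - k)) ^ 2 * ((n : ℝ) / ((n : ℝ) - k)) ^ ((d : ℝ) / 2) *
            gauss d (Real.sqrt 2 * n * η) x := by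
  have hπ : 0 < Real.pi := Real.pi_pos
  set p : ℝ := (d : ℝ) / 2 with hp_def
  have hd1 : (1 : ℝ) ≤ (d : ℝ) := by exact_mod_cast hd
  have hp : 0 < p := by rw [hp_def]; linarith
  set A : ℝ := (2 * Real.pi * η) ^ (-p) with hA_def
  have hA : 0 < A := Real.rpow_pos_of_pos (by positivity) _
  have hs2 : (0:ℝ) < Real.sqrt 2 := Real.sqrt_pos.mpr (by norm_num)
  refine ⟨(128 + 2 * (p + 1) ^ 2) * Real.sqrt 2 ^ p, by positivity, ?_⟩
  intro n k hk hkn x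
  set X : ℝ := ∑ i, ((x i : ℝ)) ^ 2 with hX_def
  have hX : 0 ≤ X := Finset.sum_nonneg fun i _ => sq_nonneg _
  set B : ℝ := X / (2 * η) with hB_def
  have hB : 0 ≤ B := by positivity
  have hn0 : 0 < n := lt_trans hk hkn
  have hN : (0:ℝ) < (n:ℝ) := by exact_mod_cast hn0
  have hKk : (0:ℝ) < (k:ℝ) := by exact_mod_cast hk
  have haa1 : (1:ℝ) ≤ (n:ℝ) - (k:ℝ) := by
    have : (k:ℝ) + 1 ≤ (n:ℝ) := by exact_mod_cast hkn
    linarith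
  have haa0 : (0:ℝ) < (n:ℝ) - (k:ℝ) := by linarith
  have hab : (n:ℝ) - (k:ℝ) ≤ (n:ℝ) := by linarith
  have hg1 : gauss d (((n:ℝ) - k) * η) x = gf A B p ((n:ℝ) - k) :=
    gauss_eq_gf d η hη x haa0
  have hg2 : gauss d ((n:ℝ) * η) x = gf A B p (n:ℝ) := gauss_eq_gf d η hη x hN
  have hg3 : gauss d (Real.sqrt 2 * (n:ℝ) * η) x = gf A B p (Real.sqrt 2 * (n:ℝ)) :=
    gauss_eq_gf d η hη x (by positivity)
  have hXB : X = 2 * η * B := by rw [hB_def]; field_simp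
  have hd2 : (d:ℝ) = 2 * p := by rw [hp_def]; ring
  have e1 : ((n:ℝ)) ^ (-p - 1) * (n:ℝ) = (n:ℝ) ^ (-p) := by
    rw [← Real.rpow_add_one (ne_of_gt hN)]; ring_nf
  have hmid : ((k:ℝ) / (2 * n)) * (X / (n * η) - d) * gf A B p (n:ℝ)
      = ((n:ℝ) - ((n:ℝ) - k)) * gf1 A B p (n:ℝ) := by
    unfold gf gf1
    rw [show (n:ℝ) - ((n:ℝ) - (k:ℝ)) = (k:ℝ) by ring, hd2, hXB, ← e1]
    field_simp
  have hM : ∀ t ∈ Set.Icc ((n:ℝ) - k) (n:ℝ), |gf2 A B p t| ≤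
      (128 + 2 * (p + 1) ^ 2) * A * ((n:ℝ) - k) ^ (-p - 2) *
        Real.exp (-(B / (Real.sqrt 2 * n))) :=
    fun t ht => gf2_bound A B p hA hB hp haa0 ht
  have htay := taylor_bound A B p haa0 hab hM
  rw [hg1, hg2, hg3]
  have hrewrite : gf A B p ((n:ℝ) - k) -
      (gf A B p (n:ℝ) - (k:ℝ) / (2 * n) * (X / (n * η) - d) * gf A B p (n:ℝ))
      = gf A B p ((n:ℝ) - k) - gf A B p (n:ℝ) + ((n:ℝ) - ((n:ℝ) - k)) * gf1 A B p (n:ℝ) := by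
    rw [hmid]; ring
  rw [hrewrite]
  refine htay.trans (le_of_eq ?_)
  unfold gf
  have r1 : ((n:ℝ) - k) ^ (-p - 2) = (((n:ℝ) - k) ^ p)⁻¹ * ((((n:ℝ) - k)) ^ (2:ℕ))⁻¹ := by
    rw [show -p - 2 = -p + -(2:ℝ) by ring, Real.rpow_add haa0, Real.rpow_neg haa0.le,
      Real.rpow_neg haa0.le, Real.rpow_two]
  have r2 : ((n:ℝ) / ((n:ℝ) - k)) ^ p = (n:ℝ) ^ p * (((n:ℝ) - k) ^ p)⁻¹ := by
    rw [Real.div_rpow hN.le haa0.le, div_eq_mul_inv]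
  have r3 : (Real.sqrt 2 * (n:ℝ)) ^ (-p)
      = (Real.sqrt 2 ^ p)⁻¹ * (((n:ℝ)) ^ p)⁻¹ := by
    rw [Real.mul_rpow hs2.le hN.le, Real.rpow_neg hs2.le, Real.rpow_neg hN.le]
  have h1 : ((n:ℝ) - k) ^ p ≠ 0 := ne_of_gt (Real.rpow_pos_of_pos haa0 _)
  have h2 : ((n:ℝ)) ^ p ≠ 0 := ne_of_gt (Real.rpow_pos_of_pos hN _)
  have h3 : Real.sqrt 2 ^ p ≠ 0 := ne_of_gt (Real.rpow_pos_of_pos hs2 _)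
  rw [r1, r2, r3, neg_div, show (n:ℝ) - ((n:ℝ) - (k:ℝ)) = (k:ℝ) by ring]
  field_simp
end

section
/- For the weakly self-avoiding walk connectivities, the recursion (lace expansion) C_n(x) = ∑_{y:|y|=1} C_{n−1}(x−y) + ∑_{m=2}^n ∑_{z∈ℤ^d} Π_m(z) C_{n−m}(x−z) holds for all n ≥ 1 and x ∈ ℤ^d. -/
open scoped Classical

/-- The unit step of the nearest-neighbour walk encoded by a coordinate and a sign. -/
def dirStep (d : ℕ) (p : Fin d × Bool) : Fin d → ℤ :=
  fun i => if i = p.1 then (if p.2 then 1 else -1) else 0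

/-- Position after `k` steps of the path encoded by the step sequence `σ`. -/
def pathPos {d n : ℕ} (σ : Fin n → Fin d × Bool) (k : ℕ) : Fin d → ℤ :=
  ∑ j : Fin n, if (j : ℕ) < k then dirStep d (σ j) else 0

/-- Intersection indicator `U_{st}(ω)`. -/
noncomputable def Uind {d n : ℕ} (σ : Fin n → Fin d × Bool) (s t : ℕ) : ℝ :=
  if pathPos σ s = pathPos σ t then 1 else 0

/-- The connectivity `C_n(x)` of the weakly self-avoiding walk with parameter `λ`. -/
noncomputable def Conn (d : ℕ) (lam : ℝ) (n : ℕ) (x : Fin d → ℤ) : ℝ :=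
  ∑ σ : Fin n → Fin d × Bool,
    if pathPos σ n = x then
      ∏ s ∈ Finset.range (n + 1), ∏ t ∈ Finset.Ioc s n, (1 - lam * Uind σ s t)
    else 0

/-- A graph (set of edges `(s,t)`, `s < t`) on `[a,b]` is connected. -/
def IsConnGraph (a b : ℕ) (Γ : Finset (ℕ × ℕ)) : Prop :=
  (∀ e ∈ Γ, a ≤ e.1 ∧ e.1 < e.2 ∧ e.2 ≤ b) ∧
  (∃ e ∈ Γ, e.1 = a) ∧ (∃ e ∈ Γ, e.2 = b) ∧
  ∀ c, a < c → c < b → ∃ e ∈ Γ, e.1 < c ∧ c < e.2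

/-- `J[a,b](ω) = ∑_{Γ connected on [a,b]} ∏_{st∈Γ} (-λ U_{st}(ω))`. -/
noncomputable def Jlace (d : ℕ) (lam : ℝ) {n : ℕ} (σ : Fin n → Fin d × Bool)
    (a b : ℕ) : ℝ :=
  ∑ Γ ∈ (Finset.range (b + 1) ×ˢ Finset.range (b + 1)).powerset.filter (IsConnGraph a b),
    ∏ e ∈ Γ, (-(lam * Uind σ e.1 e.2))

/-- The lace function `Π_m(x) = ∑_{ω : 0 → x, |ω| = m} J[0,m](ω)`. -/
noncomputable def Pifun (d : ℕ) (lam : ℝ) (m : ℕ) (x : Fin d → ℤ) : ℝ :=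
  ∑ σ : Fin m → Fin d × Bool, if pathPos σ m = x then Jlace d lam σ 0 m else 0

/-! ### Auxiliary material -/

open Finset

/-- The set of admissible edges on the interval `[a,b]`. -/
def Eset (a b : ℕ) : Finset (ℕ × ℕ) :=
  (Finset.range (b+1) ×ˢ Finset.range (b+1)).filter
    (fun e => a ≤ e.1 ∧ e.1 < e.2 ∧ e.2 ≤ b)

lemma mem_Eset {a b : ℕ} {e : ℕ × ℕ} :
    e ∈ Eset a b ↔ a ≤ e.1 ∧ e.1 < e.2 ∧ e.2 ≤ b := by
  simp only [Eset, mem_filter, mem_product, mem_range]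
  constructor
  · rintro ⟨-, h⟩; exact h
  · rintro ⟨h1, h2, h3⟩; exact ⟨⟨by omega, by omega⟩, h1, h2, h3⟩

/-- Rewrite the double product over `s < t` as a product over `Eset 0 n`. -/
lemma prod_pairs (f : ℕ → ℕ → ℝ) (n : ℕ) :
    ∏ s ∈ Finset.range (n+1), ∏ t ∈ Finset.Ioc s n, f s t
      = ∏ e ∈ Eset 0 n, f e.1 e.2 := by
  rw [Finset.prod_sigma']
  refine Finset.prod_nbij' (fun x => (x.1, x.2)) (fun e => ⟨e.1, e.2⟩) ?_ ?_ ?_ ?_ ?_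
  · intro a ha
    simp only [Finset.mem_sigma, mem_range, Finset.mem_Ioc] at ha
    exact mem_Eset.2 ⟨Nat.zero_le _, ha.2.1, ha.2.2⟩
  · intro e he
    rw [mem_Eset] at he
    simp only [Finset.mem_sigma, mem_range, Finset.mem_Ioc]
    exact ⟨by omega, he.2.1, he.2.2⟩
  · intro a _; rfl
  · intro e _; rfl
  · intro a _; rfl

/-- `Conn` in terms of `Eset`. -/
lemma Conn_eq (d : ℕ) (lam : ℝ) (n : ℕ) (x : Fin d → ℤ) :
    Conn d lam n x = ∑ σ : Fin n → Fin d × Bool,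
      if pathPos σ n = x then
        ∏ e ∈ Eset 0 n, (1 + -(lam * Uind σ e.1 e.2))
      else 0 := by
  unfold Conn
  refine Finset.sum_congr rfl fun σ _ => ?_
  congr 1
  rw [prod_pairs (fun s t => 1 - lam * Uind σ s t) n]
  exact Finset.prod_congr rfl fun e _ => by ring

/-! ### The cut-point decomposition of graphs -/

/-- `c` is a cut point of the graph `Γ`. -/
def isCut (Γ : Finset (ℕ × ℕ)) (c : ℕ) : Prop := ∀ e ∈ Γ, ¬(e.1 < c ∧ c < e.2)

/-- The first positive cut point of a graph. -/
noncomputable def mcut (Γ : Finset (ℕ × ℕ)) : ℕ := sInf {c | 1 ≤ c ∧ isCut Γ c}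

lemma mcut_spec {n : ℕ} {Γ : Finset (ℕ × ℕ)} (hΓ : Γ ⊆ Eset 0 n) (hn : 1 ≤ n) :
    (1 ≤ mcut Γ ∧ isCut Γ (mcut Γ)) ∧ mcut Γ ≤ n ∧
      ∀ c, 1 ≤ c → c < mcut Γ → ¬ isCut Γ c := by
  have hnmem : n ∈ {c | 1 ≤ c ∧ isCut Γ c} := by
    refine ⟨hn, fun e he => ?_⟩
    have := (mem_Eset.1 (hΓ he)).2.2
    omega
  refine ⟨Nat.sInf_mem ⟨n, hnmem⟩, Nat.sInf_le hnmem, fun c hc1 hc2 hcut => ?_⟩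
  have h : mcut Γ ≤ c := Nat.sInf_le (⟨hc1, hcut⟩ : c ∈ {c | 1 ≤ c ∧ isCut Γ c})
  omega

/-- Sum over graphs with prescribed cut value `m` factorizes. -/
lemma sum_mcut_eq (w : ℕ × ℕ → ℝ) {n m : ℕ} (hm1 : 1 ≤ m) (hmn : m ≤ n) :
    ∑ Γ ∈ ((Eset 0 n).powerset.filter
        (fun Γ => (¬ ∀ e ∈ Γ, 1 ≤ e.1) ∧ mcut Γ = m)), ∏ e ∈ Γ, w e
      = (∑ Γ ∈ ((Finset.range (m + 1) ×ˢ Finset.range (m + 1)).powerset.filter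
          (IsConnGraph 0 m)), ∏ e ∈ Γ, w e)
        * ∑ Γ ∈ (Eset m n).powerset, ∏ e ∈ Γ, w e := by
  have hn : 1 ≤ n := le_trans hm1 hmn
  rw [Finset.sum_mul_sum, ← Finset.sum_product']
  refine Finset.sum_nbij'
    (fun Γ => (Γ.filter (fun e => e.2 ≤ m), Γ.filter (fun e => m ≤ e.1)))
    (fun p => p.1 ∪ p.2) ?_ ?_ ?_ ?_ ?_
  · -- forward membership
    intro Γ hΓ
    simp only [mem_filter, Finset.mem_powerset] at hΓ
    obtain ⟨hsub, hne, hmc⟩ := hΓ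
    obtain ⟨⟨-, hcut⟩, -, hnocut⟩ := mcut_spec hsub hn
    rw [hmc] at hcut hnocut
    push_neg at hne
    obtain ⟨e0, he0, he0lt⟩ := hne
    have he0' : e0.1 = 0 := by omega
    -- every edge is on one side of m
    have hside : ∀ e ∈ Γ, e.2 ≤ m ∨ m ≤ e.1 := by
      intro e he
      have := hcut e he
      omega
    have he0m : e0.2 ≤ m := by
      have := hcut e0 he0
      have := (mem_Eset.1 (hsub he0)).2.1
      omega
    simp only [Finset.mem_product, mem_filter, Finset.mem_powerset]
    constructor
    · constructor
      · -- subset of range × range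
        intro e he
        simp only [mem_filter] at he
        have hE := mem_Eset.1 (hsub he.1)
        simp only [Finset.mem_product, mem_range]
        omega
      · -- connected graph on [0,m]
        refine ⟨?_, ⟨e0, ?_, he0'⟩, ?_, ?_⟩
        · intro e he
          simp only [mem_filter] at he
          have hE := mem_Eset.1 (hsub he.1)
          exact ⟨Nat.zero_le _, hE.2.1, he.2⟩
        · simp only [mem_filter]; exact ⟨he0, he0m⟩
        · -- an edge ending at m
          by_cases hm1' : m = 1
          · refine ⟨e0, ?_, ?_⟩
            · simp only [mem_filter]; exact ⟨he0, he0m⟩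
            · have := (mem_Eset.1 (hsub he0)).2.1
              omega
          · -- m ≥ 2 : use that m-1 is not a cut
            have hnc := hnocut (m-1) (by omega) (by omega)
            simp only [isCut] at hnc
            push_neg at hnc
            obtain ⟨e, he, h1⟩ := hnc
            have h2 := hcut e he
            refine ⟨e, ?_, by omega⟩
            simp only [mem_filter]
            exact ⟨he, by omega⟩
        · -- covering
          intro c hc0 hcm
          have hnc := hnocut c (by omega) hcm
          simp only [isCut] at hnc
          push_neg at hnc
          obtain ⟨e, he, h1⟩ := hnc
          have h2 := hcut e he
          refine ⟨e, ?_, h1.1, h1.2⟩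
          simp only [mem_filter]
          exact ⟨he, by omega⟩
    · -- second component
      intro e he
      simp only [mem_filter] at he
      have hE := mem_Eset.1 (hsub he.1)
      exact mem_Eset.2 ⟨he.2, hE.2.1, hE.2.2⟩
  · -- backward membership
    intro p hp
    simp only [Finset.mem_product, mem_filter, Finset.mem_powerset] at hp
    obtain ⟨⟨hp1sub, hp1conn⟩, hp2⟩ := hp
    obtain ⟨hedges, ⟨e0, he0, he0'⟩, -, hcover⟩ := hp1conn
    simp only [mem_filter, Finset.mem_powerset]
    have hsub : p.1 ∪ p.2 ⊆ Eset 0 n := by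
      intro e he
      rcases Finset.mem_union.1 he with h | h
      · have := hedges e h
        exact mem_Eset.2 ⟨Nat.zero_le _, this.2.1, by omega⟩
      · have := mem_Eset.1 (hp2 h)
        exact mem_Eset.2 ⟨Nat.zero_le _, this.2.1, this.2.2⟩
    refine ⟨hsub, ?_, ?_⟩
    · push_neg
      exact ⟨e0, Finset.mem_union_left _ he0, by omega⟩
    · -- mcut = m
      have hcutm : m ∈ {c | 1 ≤ c ∧ isCut (p.1 ∪ p.2) c} := by
        refine ⟨hm1, fun e he => ?_⟩
        rcases Finset.mem_union.1 he with h | h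
        · have := (hedges e h).2.2; omega
        · have := (mem_Eset.1 (hp2 h)).1; omega
      have h1 : mcut (p.1 ∪ p.2) ≤ m := Nat.sInf_le hcutm
      have h2 : ¬ mcut (p.1 ∪ p.2) < m := by
        intro hlt
        have hmem : 1 ≤ mcut (p.1 ∪ p.2) ∧ isCut (p.1 ∪ p.2) (mcut (p.1 ∪ p.2)) :=
          Nat.sInf_mem (⟨m, hcutm⟩ :
            Set.Nonempty {c | 1 ≤ c ∧ isCut (p.1 ∪ p.2) c})
        obtain ⟨hge1, hcut⟩ := hmem
        obtain ⟨e, he, h3, h4⟩ := hcover (mcut (p.1 ∪ p.2)) (by omega) hlt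
        exact hcut e (Finset.mem_union_left _ he) ⟨h3, h4⟩
      omega
  · -- left inverse
    intro Γ hΓ
    simp only [mem_filter, Finset.mem_powerset] at hΓ
    obtain ⟨hsub, hne, hmc⟩ := hΓ
    obtain ⟨⟨-, hcut⟩, -, -⟩ := mcut_spec hsub hn
    rw [hmc] at hcut
    show Γ.filter (fun e => e.2 ≤ m) ∪ Γ.filter (fun e => m ≤ e.1) = Γ
    rw [← Finset.filter_or, Finset.filter_true_of_mem]
    intro e he
    have h1 := hcut e he
    have h2 := (mem_Eset.1 (hsub he)).2.1
    omega
  · -- right inverse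
    intro p hp
    simp only [Finset.mem_product, mem_filter, Finset.mem_powerset] at hp
    obtain ⟨⟨hp1sub, hp1conn⟩, hp2⟩ := hp
    have h1 : ∀ e ∈ p.1, e.2 ≤ m ∧ ¬ m ≤ e.1 := by
      intro e he
      have := hp1conn.1 e he
      omega
    have h2 : ∀ e ∈ p.2, m ≤ e.1 ∧ ¬ e.2 ≤ m := by
      intro e he
      have := mem_Eset.1 (hp2 he)
      omega
    have e1 : (p.1 ∪ p.2).filter (fun e => e.2 ≤ m) = p.1 := by
      rw [Finset.filter_union]
      rw [Finset.filter_true_of_mem (fun e he => (h1 e he).1),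
        Finset.filter_false_of_mem (fun e he => (h2 e he).2), Finset.union_empty]
    have e2 : (p.1 ∪ p.2).filter (fun e => m ≤ e.1) = p.2 := by
      rw [Finset.filter_union]
      rw [Finset.filter_false_of_mem (fun e he => (h1 e he).2),
        Finset.filter_true_of_mem (fun e he => (h2 e he).1), Finset.empty_union]
    show ((p.1 ∪ p.2).filter (fun e => e.2 ≤ m), (p.1 ∪ p.2).filter (fun e => m ≤ e.1)) = p
    rw [e1, e2]
  · -- values agree
    intro Γ hΓ
    simp only [mem_filter, Finset.mem_powerset] at hΓ
    obtain ⟨hsub, hne, hmc⟩ := hΓ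
    obtain ⟨⟨-, hcut⟩, -, -⟩ := mcut_spec hsub hn
    rw [hmc] at hcut
    have hdisj : Disjoint (Γ.filter (fun e => e.2 ≤ m)) (Γ.filter (fun e => m ≤ e.1)) := by
      rw [Finset.disjoint_left]
      intro e he1 he2
      simp only [mem_filter] at he1 he2
      have := (mem_Eset.1 (hsub he1.1)).2.1
      omega
    have hunion : Γ.filter (fun e => e.2 ≤ m) ∪ Γ.filter (fun e => m ≤ e.1) = Γ := by
      rw [← Finset.filter_or, Finset.filter_true_of_mem]
      intro e he
      have h1 := hcut e he
      have h2 := (mem_Eset.1 (hsub he)).2.1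
      omega
    show ∏ e ∈ Γ, w e = (∏ e ∈ Γ.filter (fun e => e.2 ≤ m), w e)
      * ∏ e ∈ Γ.filter (fun e => m ≤ e.1), w e
    rw [← Finset.prod_union hdisj, hunion]

set_option maxHeartbeats 1000000 in
/-- The key pointwise expansion identity. -/
lemma K_split (w : ℕ × ℕ → ℝ) (n : ℕ) (hn : 1 ≤ n) :
    ∏ e ∈ Eset 0 n, (1 + w e)
      = (∏ e ∈ Eset 1 n, (1 + w e))
        + ∑ m ∈ Finset.Icc 1 n,
            (∑ Γ ∈ ((Finset.range (m + 1) ×ˢ Finset.range (m + 1)).powerset.filter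
              (IsConnGraph 0 m)), ∏ e ∈ Γ, w e)
            * ∏ e ∈ Eset m n, (1 + w e) := by
  have hexp : ∀ a b : ℕ, ∏ e ∈ Eset a b, (1 + w e)
      = ∑ Γ ∈ (Eset a b).powerset, ∏ e ∈ Γ, w e := by
    intro a b
    have h := Finset.prod_add w (fun _ => (1:ℝ)) (Eset a b)
    simp only [Finset.prod_const_one, mul_one] at h
    rw [← h]
    exact Finset.prod_congr rfl fun e _ => add_comm 1 (w e)
  rw [hexp 0 n]
  rw [← Finset.sum_filter_add_sum_filter_not ((Eset 0 n).powerset)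
    (fun Γ => ∀ e ∈ Γ, 1 ≤ e.1)]
  congr 1
  · -- no edge touching 0
    rw [hexp 1 n]
    apply Finset.sum_congr _ (fun _ _ => rfl)
    ext Γ
    simp only [mem_filter, Finset.mem_powerset, Finset.subset_iff, mem_Eset]
    constructor
    · rintro ⟨h1, h2⟩ e he
      exact ⟨h2 e he, (h1 he).2.1, (h1 he).2.2⟩
    · intro h
      exact ⟨fun {e} he => ⟨Nat.zero_le _, (h he).2.1, (h he).2.2⟩,
        fun e he => (h he).1⟩
  · -- graphs with an edge at 0, fibred over the cut point
    refine Eq.trans (Finset.sum_fiberwise_of_maps_to (g := mcut) (t := Finset.Icc 1 n)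
      ?_ (fun Γ => ∏ e ∈ Γ, w e)).symm ?_
    · intro Γ hΓ
      simp only [mem_filter, Finset.mem_powerset] at hΓ
      obtain ⟨h4, h2, -⟩ := mcut_spec hΓ.1 hn
      exact Finset.mem_Icc.2 ⟨h4.1, h2⟩
    refine Finset.sum_congr rfl fun m hm => ?_
    rw [Finset.mem_Icc] at hm
    rw [hexp m n]
    refine Eq.trans (Finset.sum_congr ?_ (fun _ _ => rfl)) (sum_mcut_eq w hm.1 hm.2)
    ext Γ
    simp only [Finset.mem_filter]
    tauto

/-! ### Path splitting lemmas -/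

lemma pathPos_zero {d n : ℕ} (σ : Fin n → Fin d × Bool) : pathPos σ 0 = 0 := by
  simp [pathPos]

lemma pathPos_stable {d m : ℕ} (σ : Fin m → Fin d × Bool) {s : ℕ} (h : m ≤ s) :
    pathPos σ s = pathPos σ m := by
  unfold pathPos
  refine Finset.sum_congr rfl fun j _ => ?_
  have hj : (j : ℕ) < m := j.isLt
  rw [if_pos (by omega), if_pos (by omega)]

lemma pathPos_append {d m k : ℕ} (σ1 : Fin m → Fin d × Bool) (σ2 : Fin k → Fin d × Bool)
    (t : ℕ) :
    pathPos (Fin.append σ1 σ2) t = pathPos σ1 t + pathPos σ2 (t - m) := by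
  unfold pathPos
  rw [Fin.sum_univ_add]
  congr 1
  · refine Finset.sum_congr rfl fun j _ => ?_
    rw [Fin.append_left]
    refine if_congr ?_ rfl rfl
    simp only [Fin.coe_castAdd]
  · refine Finset.sum_congr rfl fun j _ => ?_
    rw [Fin.append_right]
    refine if_congr ?_ rfl rfl
    simp only [Fin.coe_natAdd]
    omega

lemma Uind_append_low {d m k : ℕ} (σ1 : Fin m → Fin d × Bool) (σ2 : Fin k → Fin d × Bool)
    {s t : ℕ} (hs : s ≤ m) (ht : t ≤ m) :
    Uind (Fin.append σ1 σ2) s t = Uind σ1 s t := by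
  unfold Uind
  rw [pathPos_append, pathPos_append, Nat.sub_eq_zero_of_le hs, Nat.sub_eq_zero_of_le ht,
    pathPos_zero, add_zero, add_zero]

lemma Uind_append_high {d m k : ℕ} (σ1 : Fin m → Fin d × Bool) (σ2 : Fin k → Fin d × Bool)
    {s t : ℕ} (hs : m ≤ s) (ht : m ≤ t) :
    Uind (Fin.append σ1 σ2) s t = Uind σ2 (s - m) (t - m) := by
  unfold Uind
  rw [pathPos_append, pathPos_append, pathPos_stable σ1 hs, pathPos_stable σ1 ht]
  simp [add_right_inj]

lemma Jlace_append {d m k : ℕ} (lam : ℝ) (σ1 : Fin m → Fin d × Bool)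
    (σ2 : Fin k → Fin d × Bool) :
    Jlace d lam (Fin.append σ1 σ2) 0 m = Jlace d lam σ1 0 m := by
  unfold Jlace
  refine Finset.sum_congr rfl fun Γ hΓ => Finset.prod_congr rfl fun e he => ?_
  simp only [Finset.mem_filter] at hΓ
  have hb := hΓ.2.1 e he
  rw [Uind_append_low σ1 σ2 (by omega) hb.2.2]

lemma Kprod_shift {d m k : ℕ} (lam : ℝ) (σ1 : Fin m → Fin d × Bool)
    (σ2 : Fin k → Fin d × Bool) :
    ∏ e ∈ Eset m (m + k), (1 + -(lam * Uind (Fin.append σ1 σ2) e.1 e.2))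
      = ∏ e ∈ Eset 0 k, (1 + -(lam * Uind σ2 e.1 e.2)) := by
  refine Finset.prod_nbij' (fun e => (e.1 - m, e.2 - m)) (fun e => (e.1 + m, e.2 + m))
    ?_ ?_ ?_ ?_ ?_
  · intro e he
    rw [mem_Eset] at he ⊢
    dsimp only
    omega
  · intro e he
    rw [mem_Eset] at he ⊢
    dsimp only
    omega
  · intro e he
    rw [mem_Eset] at he
    have h1 : e.1 - m + m = e.1 := by omega
    have h2 : e.2 - m + m = e.2 := by omega
    simp only [h1, h2]
  · intro e he
    simp only [Nat.add_sub_cancel]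
  · intro e he
    rw [mem_Eset] at he
    have h := Uind_append_high σ1 σ2 he.1 (le_trans he.1 (le_of_lt he.2.1))
    rw [h]

lemma sum_append {d m k : ℕ} (F : (Fin (m + k) → Fin d × Bool) → ℝ) :
    ∑ σ : Fin (m + k) → Fin d × Bool, F σ
      = ∑ σ1 : Fin m → Fin d × Bool, ∑ σ2 : Fin k → Fin d × Bool, F (Fin.append σ1 σ2) :=
  calc ∑ σ : Fin (m + k) → Fin d × Bool, F σ
      = ∑ p : (Fin m → Fin d × Bool) × (Fin k → Fin d × Bool), F (Fin.append p.1 p.2) :=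
        (Fintype.sum_equiv (Fin.appendEquiv m k) _ _ fun p => rfl).symm
    _ = _ := Fintype.sum_prod_type _

/-! ### The two terms of the expansion -/

lemma first_term {d n : ℕ} (lam : ℝ) (hn : 1 ≤ n) (x : Fin d → ℤ) :
    (∑ σ : Fin n → Fin d × Bool,
        if pathPos σ n = x then
          ∏ e ∈ Eset 1 n, (1 + -(lam * Uind σ e.1 e.2))
        else 0)
      = ∑ p : Fin d × Bool, Conn d lam (n - 1) (x - dirStep d p) := by
  obtain ⟨k, rfl⟩ : ∃ k, n = 1 + k := ⟨n - 1, by omega⟩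
  rw [Nat.add_sub_cancel_left]
  rw [sum_append]
  refine Fintype.sum_equiv (Equiv.funUnique (Fin 1) (Fin d × Bool)) _ _ fun σ1 => ?_
  have hfu : (Equiv.funUnique (Fin 1) (Fin d × Bool)) σ1 = σ1 0 := rfl
  rw [hfu, Conn_eq]
  refine Finset.sum_congr rfl fun σ2 _ => ?_
  have hpos1 : pathPos σ1 (1 + k) = dirStep d (σ1 0) := by
    rw [pathPos_stable σ1 (by omega)]
    simp [pathPos]
  have hk1 : 1 + k - 1 = k := by omega
  have hpos : pathPos (Fin.append σ1 σ2) (1 + k) = dirStep d (σ1 0) + pathPos σ2 k := by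
    rw [pathPos_append, hpos1, hk1]
  refine if_congr ?_ (Kprod_shift lam σ1 σ2) rfl
  rw [hpos]
  constructor
  · intro h; rw [← h]; abel
  · intro h; rw [h]; abel

lemma Jlace_one {d n : ℕ} (lam : ℝ) (σ : Fin n → Fin d × Bool) (hn : 1 ≤ n) :
    Jlace d lam σ 0 1 = 0 := by
  have hpos : pathPos σ 1 = dirStep d (σ ⟨0, hn⟩) := by
    unfold pathPos
    rw [Finset.sum_eq_single (⟨0, hn⟩ : Fin n)]
    · simp
    · intro j _ hj
      rw [if_neg]
      simp only [Nat.lt_one_iff]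
      intro h
      exact hj (Fin.ext h)
    · intro h
      exact absurd (Finset.mem_univ _) h
  have hne : pathPos σ 0 ≠ pathPos σ 1 := by
    rw [pathPos_zero, hpos]
    intro h
    have h2 := congrFun h (σ ⟨0, hn⟩).1
    simp only [Pi.zero_apply, dirStep, if_pos rfl] at h2
    cases hb : (σ ⟨0, hn⟩).2 <;> rw [hb] at h2 <;> norm_num at h2
  unfold Jlace
  refine Finset.sum_eq_zero fun Γ hΓ => ?_
  simp only [Finset.mem_filter] at hΓ
  obtain ⟨-, hbound, ⟨e, he, he1⟩, -, -⟩ := hΓ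
  have hb := hbound e he
  have heq : e = (0, 1) := Prod.ext (by omega) (by omega)
  refine Finset.prod_eq_zero he ?_
  rw [heq]
  show -(lam * Uind σ 0 1) = 0
  unfold Uind
  rw [if_neg hne]
  ring

lemma second_term {d n m : ℕ} (lam : ℝ) (hm : 1 ≤ m) (hmn : m ≤ n) (x : Fin d → ℤ) :
    (∑ σ : Fin n → Fin d × Bool,
        if pathPos σ n = x then
          Jlace d lam σ 0 m * ∏ e ∈ Eset m n, (1 + -(lam * Uind σ e.1 e.2))
        else 0)
      = ∑' z : Fin d → ℤ, Pifun d lam m z * Conn d lam (n - m) (x - z) := by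
  obtain ⟨k, rfl⟩ : ∃ k, n = m + k := ⟨n - m, by omega⟩
  rw [Nat.add_sub_cancel_left]
  have hsupp : ∀ z ∉ Finset.image (fun σ : Fin m → Fin d × Bool => pathPos σ m) Finset.univ,
      Pifun d lam m z * Conn d lam k (x - z) = 0 := by
    intro z hz
    have hP : Pifun d lam m z = 0 := by
      unfold Pifun
      refine Finset.sum_eq_zero fun σ _ => ?_
      rw [if_neg]
      intro h
      exact hz (Finset.mem_image.2 ⟨σ, Finset.mem_univ _, h⟩)
    rw [hP, zero_mul]
  rw [tsum_eq_sum hsupp]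
  rw [sum_append]
  have lhs_eq : ∀ σ1 : Fin m → Fin d × Bool,
      (∑ σ2 : Fin k → Fin d × Bool,
        if pathPos (Fin.append σ1 σ2) (m + k) = x then
          Jlace d lam (Fin.append σ1 σ2) 0 m *
            ∏ e ∈ Eset m (m + k), (1 + -(lam * Uind (Fin.append σ1 σ2) e.1 e.2))
        else 0)
      = Jlace d lam σ1 0 m * Conn d lam k (x - pathPos σ1 m) := by
    intro σ1
    rw [Conn_eq, Finset.mul_sum]
    refine Finset.sum_congr rfl fun σ2 _ => ?_
    rw [Jlace_append, Kprod_shift]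
    rw [mul_ite, mul_zero]
    refine if_congr ?_ rfl rfl
    rw [pathPos_append, Nat.add_sub_cancel_left, pathPos_stable σ1 (by omega)]
    constructor
    · intro h; rw [← h]; abel
    · intro h; rw [h]; abel
  refine Eq.trans (Finset.sum_congr rfl fun σ1 _ => lhs_eq σ1) ?_
  refine Eq.trans (Finset.sum_fiberwise_of_maps_to
    (g := fun σ1 : Fin m → Fin d × Bool => pathPos σ1 m)
    (t := Finset.image (fun σ : Fin m → Fin d × Bool => pathPos σ m) Finset.univ)
    (fun σ1 _ => Finset.mem_image_of_mem _ (Finset.mem_univ σ1)) _).symm ?_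
  refine Finset.sum_congr rfl fun z hz => ?_
  have hPi : Pifun d lam m z
      = ∑ σ1 ∈ Finset.univ.filter (fun σ1 : Fin m → Fin d × Bool => pathPos σ1 m = z),
          Jlace d lam σ1 0 m := by
    rw [Finset.sum_filter]
    rfl
  rw [hPi, Finset.sum_mul]
  refine Finset.sum_congr rfl fun σ1 h1 => ?_
  rw [(Finset.mem_filter.1 h1).2]

/-- The lace expansion recursion:
`C_n(x) = ∑_{|y|=1} C_{n-1}(x-y) + ∑_{m=2}^n ∑_z Π_m(z) C_{n-m}(x-z)` for `n ≥ 1`. -/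
theorem lace_expansion (d : ℕ) (hd : 1 ≤ d) (lam : ℝ) (h0 : 0 ≤ lam) (h1 : lam ≤ 1)
    (n : ℕ) (hn : 1 ≤ n) (x : Fin d → ℤ) :
    Conn d lam n x =
      (∑ p : Fin d × Bool, Conn d lam (n - 1) (x - dirStep d p)) +
        ∑ m ∈ Finset.Icc 2 n,
          ∑' z : Fin d → ℤ, Pifun d lam m z * Conn d lam (n - m) (x - z) := by
  have main : Conn d lam n x
      = (∑ σ : Fin n → Fin d × Bool,
          if pathPos σ n = x then
            ∏ e ∈ Eset 1 n, (1 + -(lam * Uind σ e.1 e.2))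
          else 0)
        + ∑ m ∈ Finset.Icc 1 n,
            ∑ σ : Fin n → Fin d × Bool,
              if pathPos σ n = x then
                Jlace d lam σ 0 m * ∏ e ∈ Eset m n, (1 + -(lam * Uind σ e.1 e.2))
              else 0 := by
    rw [Conn_eq]
    have hσ : ∀ σ : Fin n → Fin d × Bool,
        (if pathPos σ n = x then ∏ e ∈ Eset 0 n, (1 + -(lam * Uind σ e.1 e.2)) else 0)
        = (if pathPos σ n = x then ∏ e ∈ Eset 1 n, (1 + -(lam * Uind σ e.1 e.2)) else 0)
          + ∑ m ∈ Finset.Icc 1 n,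
              (if pathPos σ n = x then
                Jlace d lam σ 0 m * ∏ e ∈ Eset m n, (1 + -(lam * Uind σ e.1 e.2))
              else 0) := by
      intro σ
      by_cases h : pathPos σ n = x
      · simp only [if_pos h]
        have hK := K_split (fun e => -(lam * Uind σ e.1 e.2)) n hn
        rw [hK]
        rfl
      · simp only [if_neg h, Finset.sum_const_zero, add_zero]
    rw [Finset.sum_congr rfl (fun σ _ => hσ σ), Finset.sum_add_distrib]
    congr 1
    exact Finset.sum_comm
  rw [main]
  congr 1
  · exact first_term lam hn x
  · have hIcc : Finset.Icc 1 n = insert 1 (Finset.Icc 2 n) := by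
      ext a
      simp only [Finset.mem_Icc, Finset.mem_insert]
      omega
    have h1notin : (1 : ℕ) ∉ Finset.Icc 2 n := by
      simp [Finset.mem_Icc]
    rw [hIcc, Finset.sum_insert h1notin]
    have hzero : (∑ σ : Fin n → Fin d × Bool,
        if pathPos σ n = x then
          Jlace d lam σ 0 1 * ∏ e ∈ Eset 1 n, (1 + -(lam * Uind σ e.1 e.2))
        else 0) = 0 := by
      refine Finset.sum_eq_zero fun σ _ => ?_
      rw [Jlace_one lam σ hn, zero_mul, ite_self]
    rw [hzero, zero_add]
    refine Finset.sum_congr rfl fun m hm => ?_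
    rw [Finset.mem_Icc] at hm
    exact second_term lam (by omega) hm.2 x
end

section
/- For every nearest-neighbour path ω of length n ≥ 1 one has K[0,n](ω) = K[1,n](ω) + ∑_{m=2}^n J[0,m](ω)·K[m,n](ω), where K[a,b](ω) = ∏_{a≤s<t≤b}(1−λU_{st}(ω)) and J[a,b](ω) = ∑_{Γ∈𝒢[a,b]} ∏_{st∈Γ}(−λU_{st}(ω)) is the sum over connected graphs on [a,b]. -/
open scoped Classical

/-- `K[a,b](ω) = ∏_{a ≤ s < t ≤ b} (1 - λ U_{st}(ω))`. -/
noncomputable def Kfun (lam : ℝ) {d n : ℕ} (σ : Fin n → Fin d × Bool) (a b : ℕ) : ℝ :=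
  ∏ s ∈ Finset.Icc a b, ∏ t ∈ Finset.Ioc s b, (1 - lam * Uind σ s t)

section Aux

variable {d n : ℕ}

/-- The edge set `B[a,b]`. -/
def Bset (a b : ℕ) : Finset (ℕ × ℕ) :=
  (Finset.range (b + 1) ×ˢ Finset.range (b + 1)).filter fun e => a ≤ e.1 ∧ e.1 < e.2 ∧ e.2 ≤ b

lemma mem_Bset {a b : ℕ} {e : ℕ × ℕ} :
    e ∈ Bset a b ↔ a ≤ e.1 ∧ e.1 < e.2 ∧ e.2 ≤ b := by
  simp only [Bset, Finset.mem_filter, Finset.mem_product, Finset.mem_range]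
  omega

noncomputable def fEdge (lam : ℝ) (σ : Fin n → Fin d × Bool) (e : ℕ × ℕ) : ℝ :=
  -(lam * Uind σ e.1 e.2)

lemma Kfun_eq_sum (lam : ℝ) (σ : Fin n → Fin d × Bool) (a b : ℕ) :
    Kfun lam σ a b = ∑ Γ ∈ (Bset a b).powerset, ∏ e ∈ Γ, fEdge lam σ e := by
  have h1 : Kfun lam σ a b = ∏ e ∈ Bset a b, (fEdge lam σ e + 1) := by
    rw [Kfun, ← Finset.prod_finset_product' (Bset a b) (Finset.Icc a b)
        (fun s => Finset.Ioc s b) (fun p => by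
          simp only [mem_Bset, Finset.mem_Icc, Finset.mem_Ioc]; omega)]
    exact Finset.prod_congr rfl fun e _ => by simp [fEdge]; ring
  rw [h1, Finset.prod_add]
  simp

lemma Jlace_eq_sum (lam : ℝ) (σ : Fin n → Fin d × Bool) (a b : ℕ) :
    Jlace d lam σ a b
      = ∑ Γ ∈ (Bset a b).powerset.filter (IsConnGraph a b), ∏ e ∈ Γ, fEdge lam σ e := by
  rw [Jlace]
  apply Finset.sum_congr _ fun Γ _ => rfl
  ext Γ
  simp only [Finset.mem_filter, Finset.mem_powerset]
  constructor
  · rintro ⟨-, hc⟩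
    exact ⟨fun e he => mem_Bset.2 (hc.1 e he), hc⟩
  · rintro ⟨hs, hc⟩
    refine ⟨fun e he => ?_, hc⟩
    have h := mem_Bset.1 (hs he)
    simp only [Finset.mem_product, Finset.mem_range]
    omega

/-- Connectivity of the restriction of `Γ` to `[0,t]`. -/
def connP (Γ : Finset (ℕ × ℕ)) (t : ℕ) : Prop :=
  IsConnGraph 0 t (Γ.filter fun e => e.2 ≤ t)

/-- The maximal `t ≤ n` such that the edges of `Γ` inside `[0,t]` form a connected
graph on `[0,t]`. -/
noncomputable def mval (n : ℕ) (Γ : Finset (ℕ × ℕ)) : ℕ :=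
  Nat.findGreatest (connP Γ) n

lemma conn_of_edge0 {Γ : Finset (ℕ × ℕ)} (hΓ : Γ ⊆ Bset 0 n) {e : ℕ × ℕ}
    (he : e ∈ Γ) (h0 : e.1 = 0) : connP Γ e.2 := by
  rw [connP]
  have hb := mem_Bset.1 (hΓ he)
  refine ⟨fun x hx => ?_, ⟨e, ?_, h0⟩, ⟨e, ?_, rfl⟩, fun c hc1 hc2 => ⟨e, ?_, ?_, hc2⟩⟩
  · have hx' := Finset.mem_filter.1 hx
    have := mem_Bset.1 (hΓ hx'.1)
    exact ⟨Nat.zero_le _, this.2.1, hx'.2⟩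
  · exact Finset.mem_filter.2 ⟨he, le_rfl⟩
  · exact Finset.mem_filter.2 ⟨he, le_rfl⟩
  · exact Finset.mem_filter.2 ⟨he, le_rfl⟩
  · omega

lemma mval_spec {Γ : Finset (ℕ × ℕ)} (hΓ : Γ ⊆ Bset 0 n) (hq : ∃ e ∈ Γ, e.1 = 0) :
    1 ≤ mval n Γ ∧ mval n Γ ≤ n ∧
      IsConnGraph 0 (mval n Γ) (Γ.filter fun e => e.2 ≤ mval n Γ) := by
  show 1 ≤ mval n Γ ∧ mval n Γ ≤ n ∧ connP Γ (mval n Γ)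
  obtain ⟨e, he, h0⟩ := hq
  have hb := mem_Bset.1 (hΓ he)
  have hw := conn_of_edge0 hΓ he h0
  refine ⟨?_, Nat.findGreatest_le n,
    Nat.findGreatest_spec (P := connP Γ) hb.2.2 hw⟩
  have := Nat.le_findGreatest (P := connP Γ) hb.2.2 hw
  unfold mval
  omega

lemma no_straddle {Γ : Finset (ℕ × ℕ)} (hΓ : Γ ⊆ Bset 0 n) (hq : ∃ e ∈ Γ, e.1 = 0) :
    ∀ e ∈ Γ, e.2 ≤ mval n Γ ∨ mval n Γ ≤ e.1 := by
  intro e he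
  by_contra hcon
  push_neg at hcon
  obtain ⟨hc1, hc2⟩ := hcon
  -- e.1 < mval, mval < e.2
  obtain ⟨hm1, hmn, hbd, ⟨e₀, he₀, h00⟩, -, hstrad⟩ := mval_spec hΓ hq
  have hbe := mem_Bset.1 (hΓ he)
  have hP : connP Γ e.2 := by
    rw [connP]
    refine ⟨fun x hx => ?_, ⟨e₀, ?_, h00⟩, ⟨e, Finset.mem_filter.2 ⟨he, le_rfl⟩, rfl⟩,
      fun c hcl hcr => ?_⟩
    · have hx' := Finset.mem_filter.1 hx
      have := mem_Bset.1 (hΓ hx'.1)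
      exact ⟨Nat.zero_le _, this.2.1, hx'.2⟩
    · have h' := Finset.mem_filter.1 he₀
      exact Finset.mem_filter.2 ⟨h'.1, by omega⟩
    · by_cases hcm : c < mval n Γ
      · obtain ⟨x, hx, hx1, hx2⟩ := hstrad c hcl hcm
        have h' := Finset.mem_filter.1 hx
        exact ⟨x, Finset.mem_filter.2 ⟨h'.1, by omega⟩, hx1, hx2⟩
      · exact ⟨e, Finset.mem_filter.2 ⟨he, le_rfl⟩, by omega, hcr⟩
  have h2 := Nat.le_findGreatest (P := connP Γ) hbe.2.2 hP
  unfold mval at hc1 hc2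
  omega

lemma filter_union_eq₁ {m : ℕ} {Γ₁ Γ₂ : Finset (ℕ × ℕ)}
    (hΓ₁ : Γ₁ ⊆ Bset 0 m) (hΓ₂ : Γ₂ ⊆ Bset m n) :
    ((Γ₁ ∪ Γ₂).filter fun e => e.2 ≤ m) = Γ₁ := by
  ext e
  simp only [Finset.mem_filter, Finset.mem_union]
  constructor
  · rintro ⟨h | h, hle⟩
    · exact h
    · have := mem_Bset.1 (hΓ₂ h); omega
  · intro h
    exact ⟨Or.inl h, (mem_Bset.1 (hΓ₁ h)).2.2⟩

lemma filter_union_eq₂ {m : ℕ} {Γ₁ Γ₂ : Finset (ℕ × ℕ)}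
    (hΓ₁ : Γ₁ ⊆ Bset 0 m) (hΓ₂ : Γ₂ ⊆ Bset m n) :
    ((Γ₁ ∪ Γ₂).filter fun e => m ≤ e.1) = Γ₂ := by
  ext e
  simp only [Finset.mem_filter, Finset.mem_union]
  constructor
  · rintro ⟨h | h, hle⟩
    · have := mem_Bset.1 (hΓ₁ h); omega
    · exact h
  · intro h
    exact ⟨Or.inr h, (mem_Bset.1 (hΓ₂ h)).1⟩

lemma mval_union {m : ℕ} (h1 : 1 ≤ m) (hmn : m ≤ n) {Γ₁ Γ₂ : Finset (ℕ × ℕ)}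
    (hΓ₁ : Γ₁ ⊆ Bset 0 m) (hc : IsConnGraph 0 m Γ₁) (hΓ₂ : Γ₂ ⊆ Bset m n) :
    mval n (Γ₁ ∪ Γ₂) = m := by
  have hfm : ((Γ₁ ∪ Γ₂).filter fun e => e.2 ≤ m) = Γ₁ := filter_union_eq₁ hΓ₁ hΓ₂
  have hPm : connP (Γ₁ ∪ Γ₂) m := by rw [connP, hfm]; exact hc
  have hge : m ≤ mval n (Γ₁ ∪ Γ₂) := Nat.le_findGreatest (P := connP (Γ₁ ∪ Γ₂)) hmn hPm
  rcases eq_or_lt_of_le hge with h | h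
  · exact h.symm
  exfalso
  set M := mval n (Γ₁ ∪ Γ₂) with hM
  have hPM : connP (Γ₁ ∪ Γ₂) M :=
    Nat.findGreatest_spec (P := connP (Γ₁ ∪ Γ₂)) hmn hPm
  rw [connP] at hPM
  obtain ⟨-, -, -, hstrad⟩ := hPM
  obtain ⟨x, hx, hx1, hx2⟩ := hstrad m (by omega) h
  have hx' := Finset.mem_filter.1 hx
  rcases Finset.mem_union.1 hx'.1 with hmem | hmem
  · have := mem_Bset.1 (hΓ₁ hmem); omega
  · have := mem_Bset.1 (hΓ₂ hmem); omega

end Aux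

section Main

variable {d n : ℕ}

lemma Uind_zero_one (hd : 1 ≤ d) (hn : 1 ≤ n) (σ : Fin n → Fin d × Bool) :
    Uind σ 0 1 = 0 := by
  rw [Uind, if_neg]
  intro h
  have h0 : pathPos σ 0 = fun _ => 0 := by
    funext i
    simp [pathPos]
  have h1 : pathPos σ 1 = dirStep d (σ ⟨0, hn⟩) := by
    funext i
    rw [pathPos]
    have : ∀ j : Fin n, (if (j : ℕ) < 1 then dirStep d (σ j) else 0)
        = if j = ⟨0, hn⟩ then dirStep d (σ ⟨0, hn⟩) else 0 := by
      intro j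
      by_cases hj : j = ⟨0, hn⟩
      · subst hj; simp
      · rw [if_neg hj, if_neg]
        have : (j : ℕ) ≠ 0 := fun hc => hj (Fin.ext hc)
        omega
    rw [Finset.sum_congr rfl fun j _ => this j, Finset.sum_ite_eq' Finset.univ]
    simp
  rw [h0, h1] at h
  have := congrFun h.symm (σ ⟨0, hn⟩).1
  simp only [dirStep, if_pos rfl] at this
  split_ifs at this <;> omega

lemma Jlace_zero_one (hd : 1 ≤ d) (hn : 1 ≤ n) (lam : ℝ) (σ : Fin n → Fin d × Bool) :
    Jlace d lam σ 0 1 = 0 := by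
  rw [Jlace_eq_sum]
  apply Finset.sum_eq_zero
  intro Γ hΓ
  simp only [Finset.mem_filter, Finset.mem_powerset] at hΓ
  obtain ⟨hsub, hbd, ⟨e, he, h0⟩, -, -⟩ := hΓ
  have hb := hbd e he
  have he' : e = (0, 1) := by
    obtain ⟨e1, e2⟩ := e
    simp only [Prod.mk.injEq]
    simp only at hb h0
    omega
  apply Finset.prod_eq_zero he
  rw [he', fEdge, Uind_zero_one hd hn, mul_zero, neg_zero]

theorem K_decomposition' (hd : 1 ≤ d) (lam : ℝ)
    (hn : 1 ≤ n) (σ : Fin n → Fin d × Bool) :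
    Kfun lam σ 0 n =
      Kfun lam σ 1 n + ∑ m ∈ Finset.Icc 2 n, Jlace d lam σ 0 m * Kfun lam σ m n := by
  classical
  set q : Finset (ℕ × ℕ) → Prop := fun Γ => ∃ e ∈ Γ, e.1 = 0 with hq
  rw [Kfun_eq_sum, ← Finset.sum_filter_add_sum_filter_not ((Bset 0 n).powerset) q, add_comm]
  have hstep1 : (∑ Γ ∈ (Bset 0 n).powerset.filter fun Γ => ¬ q Γ, ∏ e ∈ Γ, fEdge lam σ e)
      = Kfun lam σ 1 n := by
    rw [Kfun_eq_sum]
    apply Finset.sum_congr _ fun Γ _ => rfl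
    ext Γ
    simp only [Finset.mem_filter, Finset.mem_powerset, hq, not_exists, not_and]
    constructor
    · rintro ⟨hs, hno⟩ e he
      have := mem_Bset.1 (hs he)
      have hne := hno e he
      exact mem_Bset.2 ⟨by omega, this.2.1, this.2.2⟩
    · intro hs
      refine ⟨fun e he => ?_, fun e he => ?_⟩
      · have := mem_Bset.1 (hs he)
        exact mem_Bset.2 ⟨Nat.zero_le _, this.2.1, this.2.2⟩
      · have := mem_Bset.1 (hs he)
        omega
  rw [hstep1]
  congr 1
  -- main part
  set S := (Bset 0 n).powerset.filter q with hS
  have hmaps : ∀ Γ ∈ S, mval n Γ ∈ Finset.Icc 1 n := by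
    intro Γ hΓ
    simp only [hS, Finset.mem_filter, Finset.mem_powerset] at hΓ
    obtain ⟨h1, h2, h3⟩ := mval_spec hΓ.1 hΓ.2
    exact Finset.mem_Icc.2 ⟨h1, h2⟩
  rw [← Finset.sum_fiberwise_of_maps_to hmaps]
  have key : ∀ m, 1 ≤ m → m ≤ n →
      (∑ Γ ∈ S.filter fun Γ => mval n Γ = m, ∏ e ∈ Γ, fEdge lam σ e)
        = Jlace d lam σ 0 m * Kfun lam σ m n := by
    intro m h1m hmn
    rw [Jlace_eq_sum, Kfun_eq_sum, Finset.sum_mul_sum, ← Finset.sum_product']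
    refine Finset.sum_nbij'
      (fun Γ => (Γ.filter fun e => e.2 ≤ m, Γ.filter fun e => m ≤ e.1))
      (fun p => p.1 ∪ p.2) ?_ ?_ ?_ ?_ ?_
    · intro Γ hΓ
      simp only [hS, Finset.mem_filter, Finset.mem_powerset] at hΓ
      obtain ⟨⟨hsub, hqq⟩, hmv⟩ := hΓ
      obtain ⟨-, -, hconn⟩ := mval_spec hsub hqq
      rw [hmv] at hconn
      simp only [Finset.mem_product, Finset.mem_filter, Finset.mem_powerset]
      refine ⟨⟨fun e he => ?_, hconn⟩, fun e he => ?_⟩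
      · have h' := Finset.mem_filter.1 he
        have := mem_Bset.1 (hsub h'.1)
        exact mem_Bset.2 ⟨Nat.zero_le _, this.2.1, h'.2⟩
      · have h' := Finset.mem_filter.1 he
        have := mem_Bset.1 (hsub h'.1)
        exact mem_Bset.2 ⟨h'.2, this.2.1, this.2.2⟩
    · intro p hp
      simp only [Finset.mem_product, Finset.mem_filter, Finset.mem_powerset] at hp
      obtain ⟨⟨hp1, hc⟩, hp2⟩ := hp
      simp only [hS, Finset.mem_filter, Finset.mem_powerset]
      refine ⟨⟨fun e he => ?_, ?_⟩, mval_union h1m hmn hp1 hc hp2⟩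
      · rcases Finset.mem_union.1 he with h | h
        · have := mem_Bset.1 (hp1 h)
          exact mem_Bset.2 ⟨Nat.zero_le _, this.2.1, by omega⟩
        · have := mem_Bset.1 (hp2 h)
          exact mem_Bset.2 ⟨Nat.zero_le _, this.2.1, this.2.2⟩
      · obtain ⟨e, he, h0⟩ := hc.2.1
        exact ⟨e, Finset.mem_union_left _ he, h0⟩
    · intro Γ hΓ
      simp only [hS, Finset.mem_filter, Finset.mem_powerset] at hΓ
      obtain ⟨⟨hsub, hqq⟩, hmv⟩ := hΓ
      show (Γ.filter fun e => e.2 ≤ m) ∪ (Γ.filter fun e => m ≤ e.1) = Γ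
      rw [← Finset.filter_or]
      apply Finset.filter_true_of_mem
      intro e he
      have := no_straddle hsub hqq e he
      omega
    · intro p hp
      simp only [Finset.mem_product, Finset.mem_filter, Finset.mem_powerset] at hp
      obtain ⟨⟨hp1, hc⟩, hp2⟩ := hp
      exact Prod.ext (filter_union_eq₁ hp1 hp2) (filter_union_eq₂ hp1 hp2)
    · intro Γ hΓ
      simp only [hS, Finset.mem_filter, Finset.mem_powerset] at hΓ
      obtain ⟨⟨hsub, hqq⟩, hmv⟩ := hΓ
      have hunion : Γ = (Γ.filter fun e => e.2 ≤ m) ∪ (Γ.filter fun e => m ≤ e.1) := by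
        rw [← Finset.filter_or]
        symm
        apply Finset.filter_true_of_mem
        intro e he
        have := no_straddle hsub hqq e he
        omega
      have hdisj : Disjoint (Γ.filter fun e => e.2 ≤ m) (Γ.filter fun e => m ≤ e.1) := by
        rw [Finset.disjoint_left]
        intro e he1 he2
        have h1 := (Finset.mem_filter.1 he1).2
        have h2 := (Finset.mem_filter.1 he2).2
        have := mem_Bset.1 (hsub (Finset.mem_filter.1 he1).1)
        omega
      calc ∏ e ∈ Γ, fEdge lam σ e
          = ∏ e ∈ (Γ.filter fun e => e.2 ≤ m) ∪ (Γ.filter fun e => m ≤ e.1),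
              fEdge lam σ e := by rw [← hunion]
        _ = _ := Finset.prod_union hdisj
  have hsplit : Finset.Icc 1 n = insert 1 (Finset.Icc 2 n) := by
    ext x
    simp only [Finset.mem_Icc, Finset.mem_insert]
    omega
  rw [hsplit, Finset.sum_insert (by simp)]
  rw [key 1 le_rfl hn, Jlace_zero_one hd hn, zero_mul, zero_add]
  apply Finset.sum_congr rfl
  intro m hm
  have := Finset.mem_Icc.1 hm
  exact key m (by omega) this.2

end Main

/-- For every path `ω` of length `n ≥ 1`:
`K[0,n] = K[1,n] + ∑_{m=2}^n J[0,m] K[m,n]`. -/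
theorem K_decomposition (d : ℕ) (hd : 1 ≤ d) (lam : ℝ) (h0 : 0 ≤ lam) (h1 : lam ≤ 1)
    (n : ℕ) (hn : 1 ≤ n) (σ : Fin n → Fin d × Bool) :
    Kfun lam σ 0 n =
      Kfun lam σ 1 n + ∑ m ∈ Finset.Icc 2 n, Jlace d lam σ 0 m * Kfun lam σ m n := by
  exact K_decomposition' hd lam hn σ
end
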